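/- arXiv:2511.01161 — 3 statements merged into one kernel-verified Lean document; each statement's English description precedes it below -/
import Mathlib

section
/- Let n ≥ 1 be an integer, δ ∈ (0, n] and p ∈ (1, ∞). There exists a constant C > 0, depending only on n, δ and p, such that for every weight w ∈ A_{p,δ} one has ln w ∈ BMO(ℝⁿ, ℋ^δ_∞) and ‖ln w‖_{BMO(ℝⁿ,ℋ^δ_∞)} ≤ C · [w]_{A_{p,δ}}^{max{1, 1/(p−1)}}. -/
open scoped ENNReal
open Set MeasureTheory

noncomputable section

/-- An axis-parallel cube in `ℝⁿ`, described by its lower corner and positive side length. -/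
structure Cube (n : ℕ) where
  corner : Fin n → ℝ
  side : ℝ
  side_pos : 0 < side

namespace Cube

/-- The half-open cube `∏ᵢ [cornerᵢ, cornerᵢ + side)` as a set of points. -/
def toSet {n : ℕ} (Q : Cube n) : Set (Fin n → ℝ) :=
  {x | ∀ i, Q.corner i ≤ x i ∧ x i < Q.corner i + Q.side}

/-- A cube is dyadic if it has the form `2^k·(z + [0,1)ⁿ)` with `k ∈ ℤ`, `z ∈ ℤⁿ`. -/
def IsDyadic {n : ℕ} (Q : Cube n) : Prop :=
  ∃ (k : ℤ) (z : Fin n → ℤ), Q.side = (2:ℝ) ^ k ∧ ∀ i, Q.corner i = (z i : ℝ) * (2:ℝ) ^ k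

/-- `Q'` is a dyadic subcube of `Q`, i.e. obtained from `Q` by repeated bisection. -/
def IsDyadicSubcube {n : ℕ} (Q' Q : Cube n) : Prop :=
  ∃ (k : ℕ) (z : Fin n → ℕ), (∀ i, z i < 2 ^ k) ∧
    Q'.side = Q.side / 2 ^ k ∧ ∀ i, Q'.corner i = Q.corner i + (z i : ℝ) * (Q.side / 2 ^ k)

/-- The concentric dilate `t·Q` of a cube. -/
def dilate {n : ℕ} (Q : Cube n) (t : ℝ) (ht : 0 < t) : Cube n :=
  ⟨fun i => Q.corner i + Q.side / 2 - t * Q.side / 2, t * Q.side, mul_pos ht Q.side_pos⟩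

end Cube

/-- The Hausdorff content `ℋ^δ_∞`. -/
def hContent (n : ℕ) (δ : ℝ) (E : Set (Fin n → ℝ)) : ℝ≥0∞ :=
  ⨅ (Qs : ℕ → Cube n) (_ : E ⊆ ⋃ i, (Qs i).toSet), ∑' i, ENNReal.ofReal ((Qs i).side ^ δ)

/-- The dyadic Hausdorff content `~ℋ^δ_∞`. -/
def dContent (n : ℕ) (δ : ℝ) (E : Set (Fin n → ℝ)) : ℝ≥0∞ :=
  ⨅ (Qs : ℕ → Cube n) (_ : (∀ i, (Qs i).IsDyadic) ∧ E ⊆ ⋃ i, (Qs i).toSet),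
    ∑' i, ENNReal.ofReal ((Qs i).side ^ δ)

/-- The Choquet integral `∫_E f dℋ^δ_∞`. -/
def integH (n : ℕ) (δ : ℝ) (f : (Fin n → ℝ) → ℝ) (E : Set (Fin n → ℝ)) : ℝ≥0∞ :=
  ∫⁻ t in Ioi (0:ℝ), hContent n δ {x | x ∈ E ∧ t < f x}

/-- The Choquet integral `∫_E f d~ℋ^δ_∞` w.r.t. the dyadic Hausdorff content. -/
def integD (n : ℕ) (δ : ℝ) (f : (Fin n → ℝ) → ℝ) (E : Set (Fin n → ℝ)) : ℝ≥0∞ :=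
  ∫⁻ t in Ioi (0:ℝ), dContent n δ {x | x ∈ E ∧ t < f x}

/-- A property holds `ℋ^δ_∞`-a.e. -/
def AEContent (n : ℕ) (δ : ℝ) (P : (Fin n → ℝ) → Prop) : Prop :=
  hContent n δ {x | ¬ P x} = 0

/-- `ℋ^δ_∞`-quasicontinuity. -/
def QuasiCont (n : ℕ) (δ : ℝ) (f : (Fin n → ℝ) → ℝ) : Prop :=
  ∀ ε : ℝ, 0 < ε → ∃ O : Set (Fin n → ℝ),
    IsOpen O ∧ hContent n δ O < ENNReal.ofReal ε ∧ ContinuousOn f Oᶜ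

/-- `L¹_loc(ℝⁿ, ℋ^δ_∞)`. -/
def MemL1loc (n : ℕ) (δ : ℝ) (f : (Fin n → ℝ) → ℝ) : Prop :=
  QuasiCont n δ f ∧ ∀ K : Set (Fin n → ℝ), IsCompact K → integH n δ (fun x => |f x|) K < ⊤

/-- `L^∞(ℝⁿ, ℋ^δ_∞)`. -/
def MemLinf (n : ℕ) (δ : ℝ) (f : (Fin n → ℝ) → ℝ) : Prop :=
  QuasiCont n δ f ∧ ∃ M : ℝ, AEContent n δ (fun x => |f x| ≤ M)

/-- The `BMO(ℝⁿ, ℋ^δ_∞)` seminorm. -/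
def bmoNorm (n : ℕ) (δ : ℝ) (f : (Fin n → ℝ) → ℝ) : ℝ≥0∞ :=
  ⨆ Q : Cube n, ⨅ c : ℝ,
    integH n δ (fun x => |f x - c|) Q.toSet / hContent n δ Q.toSet

/-- Membership in `BMO(ℝⁿ, ℋ^δ_∞)`. -/
def MemBMO (n : ℕ) (δ : ℝ) (f : (Fin n → ℝ) → ℝ) : Prop :=
  MemL1loc n δ f ∧ bmoNorm n δ f < ⊤

/-- `essinf_{x ∈ Q} f := inf {t ∈ (0,∞) : ℋ^δ_∞({x ∈ Q : f x < t}) > 0}`. -/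
def essInfQ (n : ℕ) (δ : ℝ) (f : (Fin n → ℝ) → ℝ) (Q : Cube n) : ℝ :=
  sInf {t : ℝ | 0 < t ∧ 0 < hContent n δ {x | x ∈ Q.toSet ∧ f x < t}}

/-- The `BLO(ℝⁿ, ℋ^δ_∞)` seminorm. -/
def bloNorm (n : ℕ) (δ : ℝ) (f : (Fin n → ℝ) → ℝ) : ℝ≥0∞ :=
  ⨆ Q : Cube n,
    integH n δ (fun x => |f x - essInfQ n δ f Q|) Q.toSet / hContent n δ Q.toSet

/-- Membership in `BLO(ℝⁿ, ℋ^δ_∞)`. -/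
def MemBLO (n : ℕ) (δ : ℝ) (f : (Fin n → ℝ) → ℝ) : Prop :=
  MemL1loc n δ f ∧ bloNorm n δ f < ⊤

/-- A weight: locally Choquet-integrable, quasicontinuous, positive `ℋ^δ_∞`-a.e. -/
def IsWeight (n : ℕ) (δ : ℝ) (w : (Fin n → ℝ) → ℝ) : Prop :=
  MemL1loc n δ w ∧ AEContent n δ (fun x => 0 < w x)

/-- The capacitary Muckenhoupt `A_{p,δ}` constant, for `p > 1`. -/
def apConst (n : ℕ) (δ p : ℝ) (w : (Fin n → ℝ) → ℝ) : ℝ≥0∞ :=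
  ⨆ Q : Cube n,
    (integH n δ w Q.toSet / hContent n δ Q.toSet) *
      (integH n δ (fun x => w x ^ (-(1 / (p - 1)))) Q.toSet / hContent n δ Q.toSet) ^ (p - 1)

/-- Membership in `A_{p,δ}`, `p > 1`. -/
def MemAp (n : ℕ) (δ p : ℝ) (w : (Fin n → ℝ) → ℝ) : Prop :=
  IsWeight n δ w ∧ apConst n δ p w < ⊤

/-- The Hardy–Littlewood maximal operator w.r.t. `ℋ^δ_∞`. -/
def maxOp (n : ℕ) (δ : ℝ) (g : (Fin n → ℝ) → ℝ) (x : Fin n → ℝ) : ℝ≥0∞ :=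
  ⨆ (Q : Cube n) (_ : x ∈ Q.toSet),
    integH n δ (fun y => |g y|) Q.toSet / hContent n δ Q.toSet

/-- The capacitary `A_{1,δ}` constant. -/
def a1Const (n : ℕ) (δ : ℝ) (w : (Fin n → ℝ) → ℝ) : ℝ≥0∞ :=
  sInf {c : ℝ≥0∞ | 0 < c ∧
    AEContent n δ (fun x => maxOp n δ w x ≤ c * ENNReal.ofReal (w x))}

/-- Membership in `A_{1,δ}`. -/
def MemA1 (n : ℕ) (δ : ℝ) (w : (Fin n → ℝ) → ℝ) : Prop :=
  IsWeight n δ w ∧ a1Const n δ w < ⊤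

/-- The `A_{p,δ}` constant for `p ∈ [1,∞)` (it is the `A_{1,δ}` constant when `p = 1`). -/
def apConstGen (n : ℕ) (δ p : ℝ) (w : (Fin n → ℝ) → ℝ) : ℝ≥0∞ :=
  if p = 1 then a1Const n δ w else apConst n δ p w

/-- Membership in `A_{p,δ}` for `p ∈ [1,∞)` (meaning `A_{1,δ}` when `p = 1`). -/
def MemApGen (n : ℕ) (δ p : ℝ) (w : (Fin n → ℝ) → ℝ) : Prop :=
  IsWeight n δ w ∧ apConstGen n δ p w < ⊤

/-- The weighted `BMO^q_w(ℝⁿ, ℋ^δ_∞)` seminorm. -/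
def bmoWNorm (n : ℕ) (δ q : ℝ) (w f : (Fin n → ℝ) → ℝ) : ℝ≥0∞ :=
  ⨆ Q : Cube n, ⨅ c : ℝ,
    (integH n δ (fun x => |f x - c| ^ q * w x) Q.toSet / integH n δ w Q.toSet) ^ (1 / q)

/-- Membership in `BMO^q_w(ℝⁿ, ℋ^δ_∞)`. -/
def MemBMOw (n : ℕ) (δ q : ℝ) (w f : (Fin n → ℝ) → ℝ) : Prop :=
  QuasiCont n δ f ∧
    (∀ K : Set (Fin n → ℝ), IsCompact K → integH n δ (fun x => |f x| ^ q * w x) K < ⊤) ∧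
    bmoWNorm n δ q w f < ⊤

/-- The integral average `f_{Q,δ}` with respect to the dyadic Hausdorff content. -/
def avgQ (n : ℕ) (δ : ℝ) (f : (Fin n → ℝ) → ℝ) (Q : Cube n) : ℝ :=
  ((integD n δ f (Q.toSet ∩ {x | 0 ≤ f x})).toReal -
      (integD n δ (fun x => -f x) (Q.toSet ∩ {x | f x < 0})).toReal) /
    ((dContent n δ (Q.toSet ∩ {x | 0 ≤ f x})).toReal +
      (dContent n δ (Q.toSet ∩ {x | f x < 0})).toReal)


/-! ### Auxiliary lemmas -/

namespace ApBmoAux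

open Real
open scoped NNReal

variable {n : ℕ} {δ : ℝ}

lemma hContent_mono {E F : Set (Fin n → ℝ)} (h : E ⊆ F) : hContent n δ E ≤ hContent n δ F :=
  le_iInf fun Qs => le_iInf fun hc => iInf_le_of_le Qs (iInf_le_of_le (h.trans hc) le_rfl)

lemma half_mul_two (ε : ℝ≥0) : ENNReal.ofReal ((ε:ℝ)/2) * 2 ≤ (ε : ℝ≥0∞) := by
  rw [ENNReal.ofReal_div_of_pos (by norm_num)]
  have h2 : ENNReal.ofReal 2 = 2 := by norm_num
  rw [h2, ENNReal.div_mul_cancel (by norm_num) (by norm_num), ENNReal.ofReal_coe_nnreal]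

/-- A family of tiny cubes with total content at most `2ε`. -/
lemma tiny_cubes (hδ0 : 0 < δ) {ε : ℝ} (hε : 0 < ε) :
    ∃ Ts : ℕ → Cube n, ∑' i, ENNReal.ofReal ((Ts i).side ^ δ) ≤ ENNReal.ofReal ε * 2 := by
  refine ⟨fun i => ⟨fun _ => 0, (ε * (2:ℝ)⁻¹ ^ i) ^ δ⁻¹, Real.rpow_pos_of_pos
    (mul_pos hε (pow_pos (by norm_num) i)) _⟩, ?_⟩
  have hs : ∀ i : ℕ, ((ε * (2:ℝ)⁻¹ ^ i) ^ (δ⁻¹ : ℝ)) ^ δ = ε * (2:ℝ)⁻¹ ^ i := fun i =>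
    Real.rpow_inv_rpow (le_of_lt (mul_pos hε (pow_pos (by norm_num) i))) hδ0.ne'
  simp only [hs]
  have h2 : ∀ i : ℕ, ENNReal.ofReal (ε * (2:ℝ)⁻¹ ^ i) =
      ENNReal.ofReal ε * (2:ℝ≥0∞)⁻¹ ^ i := by
    intro i
    rw [ENNReal.ofReal_mul hε.le, ENNReal.ofReal_pow (by norm_num)]
    congr 1
    rw [ENNReal.ofReal_inv_of_pos (by norm_num)]
    norm_num
  simp only [h2]
  rw [ENNReal.tsum_mul_left]
  gcongr
  rw [ENNReal.tsum_geometric]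
  simp

/-- Anything contained in a cube has content at most `side ^ δ`. -/
lemma hContent_le_of_subset_cube (hδ0 : 0 < δ) {E : Set (Fin n → ℝ)} (Q : Cube n)
    (hE : E ⊆ Q.toSet) : hContent n δ E ≤ ENNReal.ofReal (Q.side ^ δ) := by
  refine ENNReal.le_of_forall_pos_le_add fun ε hε _ => ?_
  obtain ⟨Ts, hTs⟩ := tiny_cubes (n := n) hδ0 (ε := (ε : ℝ) / 2) (by positivity)
  set Qs : ℕ → Cube n := fun i => Nat.rec Q (fun j _ => Ts j) i with hQs
  have hcov : E ⊆ ⋃ i, (Qs i).toSet := fun x hx => Set.mem_iUnion.2 ⟨0, hE hx⟩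
  have h1 : hContent n δ E ≤ ∑' i, ENNReal.ofReal ((Qs i).side ^ δ) :=
    iInf_le_of_le Qs (iInf_le_of_le hcov le_rfl)
  refine h1.trans ?_
  rw [tsum_eq_zero_add' ENNReal.summable]
  have h0 : Qs 0 = Q := rfl
  have hsucc : ∀ i, Qs (i+1) = Ts i := fun _ => rfl
  rw [h0]
  simp only [hsucc]
  exact add_le_add le_rfl (hTs.trans (half_mul_two ε))

lemma hContent_empty (hδ0 : 0 < δ) : hContent n δ (∅ : Set (Fin n → ℝ)) = 0 := by
  refine le_antisymm ?_ (zero_le)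
  have : ∀ ε : ℝ≥0, 0 < ε → hContent n δ (∅ : Set (Fin n → ℝ)) ≤ ε := by
    intro ε hε
    obtain ⟨Ts, hTs⟩ := tiny_cubes (n := n) hδ0 (ε := (ε : ℝ) / 2) (by positivity)
    have h1 : hContent n δ (∅ : Set (Fin n → ℝ)) ≤ ∑' i, ENNReal.ofReal ((Ts i).side ^ δ) :=
      iInf_le_of_le Ts (iInf_le_of_le (Set.empty_subset _) le_rfl)
    exact h1.trans (hTs.trans (half_mul_two ε))
  have h0 : hContent n δ (∅ : Set (Fin n → ℝ)) ≤ 0 + 0 := by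
    refine ENNReal.le_of_forall_pos_le_add fun ε hε _ => ?_
    simpa using this ε hε
  simpa using h0

/-- Countable subadditivity of the Hausdorff content. -/
lemma hContent_iUnion_le (hδ0 : 0 < δ) (E : ℕ → Set (Fin n → ℝ)) :
    hContent n δ (⋃ i, E i) ≤ ∑' i, hContent n δ (E i) := by
  by_cases htop : ∑' i, hContent n δ (E i) = ⊤
  · simp [htop]
  refine ENNReal.le_of_forall_pos_le_add fun ε hε htop' => ?_
  have hfin : ∀ i, hContent n δ (E i) ≠ ⊤ := fun i hi =>
    htop (by simpa [hi] using ENNReal.le_tsum (f := fun i => hContent n δ (E i)) i)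
  have hchoice : ∀ i : ℕ, ∃ Qs : ℕ → Cube n, E i ⊆ ⋃ j, (Qs j).toSet ∧
      ∑' j, ENNReal.ofReal ((Qs j).side ^ δ) ≤
        hContent n δ (E i) + (ε : ℝ≥0∞) * (2:ℝ≥0∞)⁻¹ ^ (i+1) := by
    intro i
    have hne : (ε : ℝ≥0∞) * (2:ℝ≥0∞)⁻¹ ^ (i+1) ≠ 0 :=
      mul_ne_zero (by exact_mod_cast hε.ne') (pow_ne_zero _ (by simp))
    have hlt : hContent n δ (E i) < hContent n δ (E i) + (ε : ℝ≥0∞) * (2:ℝ≥0∞)⁻¹ ^ (i+1) :=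
      ENNReal.lt_add_right (hfin i) hne
    rw [hContent, iInf_lt_iff] at hlt
    obtain ⟨Qs, hQs⟩ := hlt
    rw [iInf_lt_iff] at hQs
    obtain ⟨hc, hlt'⟩ := hQs
    exact ⟨Qs, hc, hlt'.le⟩
  choose F hFc hFs using hchoice
  set e : ℕ ≃ ℕ × ℕ := (Denumerable.eqv (ℕ × ℕ)).symm with he
  set R : ℕ → Cube n := fun k => F (e k).1 (e k).2 with hR
  have hcov : (⋃ i, E i) ⊆ ⋃ k, (R k).toSet := by
    intro x hx
    obtain ⟨i, hi⟩ := Set.mem_iUnion.1 hx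
    obtain ⟨j, hj⟩ := Set.mem_iUnion.1 (hFc i hi)
    exact Set.mem_iUnion.2 ⟨e.symm (i, j), by simpa [hR] using hj⟩
  have h1 : hContent n δ (⋃ i, E i) ≤ ∑' k, ENNReal.ofReal ((R k).side ^ δ) :=
    iInf_le_of_le R (iInf_le_of_le hcov le_rfl)
  refine h1.trans ?_
  have h2 : ∑' k, ENNReal.ofReal ((R k).side ^ δ) =
      ∑' (i) (j), ENNReal.ofReal ((F i j).side ^ δ) :=
    (e.tsum_eq fun p : ℕ × ℕ => ENNReal.ofReal ((F p.1 p.2).side ^ δ)).trans ENNReal.tsum_prod'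
  rw [h2]
  have hgeom : ∑' i : ℕ, (2:ℝ≥0∞)⁻¹ ^ (i+1) = 1 := by
    have : ∀ i : ℕ, (2:ℝ≥0∞)⁻¹ ^ (i+1) = (2:ℝ≥0∞)⁻¹ * (2:ℝ≥0∞)⁻¹ ^ i := fun i => by
      rw [pow_succ, mul_comm]
    simp only [this]
    rw [ENNReal.tsum_mul_left, ENNReal.tsum_geometric]
    simp
    rw [ENNReal.inv_mul_cancel (by norm_num) (by norm_num)]
  calc ∑' (i) (j), ENNReal.ofReal ((F i j).side ^ δ)
      ≤ ∑' i, (hContent n δ (E i) + (ε : ℝ≥0∞) * (2:ℝ≥0∞)⁻¹ ^ (i+1)) :=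
        ENNReal.tsum_le_tsum fun i => hFs i
    _ = (∑' i, hContent n δ (E i)) + (ε : ℝ≥0∞) * ∑' i : ℕ, (2:ℝ≥0∞)⁻¹ ^ (i+1) := by
        rw [ENNReal.tsum_add, ENNReal.tsum_mul_left]
    _ = (∑' i, hContent n δ (E i)) + ε := by rw [hgeom, mul_one]

lemma hContent_union_le (hδ0 : 0 < δ) (E F : Set (Fin n → ℝ)) :
    hContent n δ (E ∪ F) ≤ hContent n δ E + hContent n δ F := by
  set g : ℕ → Set (Fin n → ℝ) := fun i => if i = 0 then E else if i = 1 then F else ∅ with hg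
  have h1 : E ∪ F ⊆ ⋃ i, g i := by
    rintro x (hx | hx)
    · exact Set.mem_iUnion.2 ⟨0, by simp [hg, hx]⟩
    · exact Set.mem_iUnion.2 ⟨1, by simp [hg, hx]⟩
  refine (hContent_mono h1).trans ((hContent_iUnion_le hδ0 g).trans ?_)
  rw [tsum_eq_sum (s := {0, 1}) (by
    intro b hb
    have hb0 : b ≠ 0 := by simp_all
    have hb1 : b ≠ 1 := by simp_all
    simp [hg, hb0, hb1, hContent_empty hδ0])]
  simp [hg]

end ApBmoAux

namespace ApBmoAux2
open ApBmoAux Real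
open scoped NNReal

variable {n : ℕ} {δ : ℝ}

lemma cube_toSet_eq (Q : Cube n) :
    Q.toSet = Set.pi Set.univ fun i => Ico (Q.corner i) (Q.corner i + Q.side) := by
  ext x; simp [Cube.toSet, Set.mem_pi, Set.mem_Ico]

lemma volume_cube (Q : Cube n) :
    volume Q.toSet = ENNReal.ofReal (Q.side ^ (n : ℝ)) := by
  rw [cube_toSet_eq, volume_pi_pi]
  simp only [Real.volume_Ico, add_sub_cancel_left]
  rw [Finset.prod_const, Finset.card_univ, Fintype.card_fin, ← ENNReal.ofReal_pow Q.side_pos.le,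
    ← Real.rpow_natCast]

/-- The content of a cube is at least `side ^ δ`. -/
lemma le_hContent_cube (hδ0 : 0 < δ) (hδn : δ ≤ n) (Q : Cube n) :
    ENNReal.ofReal (Q.side ^ δ) ≤ hContent n δ Q.toSet := by
  rw [hContent]
  refine le_iInf fun Qs => le_iInf fun hc => ?_
  by_cases hbig : ∃ i, Q.side ≤ (Qs i).side
  · obtain ⟨i, hi⟩ := hbig
    exact le_trans (ENNReal.ofReal_le_ofReal
      (Real.rpow_le_rpow Q.side_pos.le hi hδ0.le)) (ENNReal.le_tsum i)
  · push_neg at hbig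
    have hvol : ENNReal.ofReal (Q.side ^ (n:ℝ)) ≤
        ∑' i, ENNReal.ofReal ((Qs i).side ^ (n:ℝ)) := by
      rw [← volume_cube]
      refine (measure_mono hc).trans ((measure_iUnion_le _).trans ?_)
      exact le_of_eq (tsum_congr fun i => volume_cube (Qs i))
    have hterm : ∀ i, ENNReal.ofReal ((Qs i).side ^ (n:ℝ)) ≤
        ENNReal.ofReal (Q.side ^ ((n:ℝ) - δ)) * ENNReal.ofReal ((Qs i).side ^ δ) := by
      intro i
      rw [← ENNReal.ofReal_mul (Real.rpow_pos_of_pos Q.side_pos _).le]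
      refine ENNReal.ofReal_le_ofReal ?_
      have h1 : (Qs i).side ^ (n:ℝ) = (Qs i).side ^ ((n:ℝ) - δ) * (Qs i).side ^ δ := by
        rw [← Real.rpow_add (Qs i).side_pos]; ring_nf
      rw [h1]
      have h2 : (Qs i).side ^ ((n:ℝ) - δ) ≤ Q.side ^ ((n:ℝ) - δ) :=
        Real.rpow_le_rpow (Qs i).side_pos.le (hbig i).le (by linarith)
      have h3 : (0:ℝ) ≤ (Qs i).side ^ δ := (Real.rpow_pos_of_pos (Qs i).side_pos δ).le
      nlinarith [Real.rpow_pos_of_pos (Qs i).side_pos ((n:ℝ) - δ)]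
    have hsum : ENNReal.ofReal (Q.side ^ (n:ℝ)) ≤
        ENNReal.ofReal (Q.side ^ ((n:ℝ) - δ)) * ∑' i, ENNReal.ofReal ((Qs i).side ^ δ) := by
      rw [← ENNReal.tsum_mul_left]
      exact hvol.trans (ENNReal.tsum_le_tsum hterm)
    have hQn : ENNReal.ofReal (Q.side ^ (n:ℝ)) =
        ENNReal.ofReal (Q.side ^ ((n:ℝ) - δ)) * ENNReal.ofReal (Q.side ^ δ) := by
      rw [← ENNReal.ofReal_mul (Real.rpow_pos_of_pos Q.side_pos _).le, ← Real.rpow_add Q.side_pos]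
      ring_nf
    rw [hQn] at hsum
    have hc0 : ENNReal.ofReal (Q.side ^ ((n:ℝ) - δ)) ≠ 0 := by
      simp [ENNReal.ofReal_eq_zero, not_le, Real.rpow_pos_of_pos Q.side_pos]
    have hctop : ENNReal.ofReal (Q.side ^ ((n:ℝ) - δ)) ≠ ⊤ := ENNReal.ofReal_ne_top
    rwa [ENNReal.mul_le_mul_iff_right hc0 hctop] at hsum

lemma hContent_cube (hδ0 : 0 < δ) (hδn : δ ≤ n) (Q : Cube n) :
    hContent n δ Q.toSet = ENNReal.ofReal (Q.side ^ δ) :=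
  le_antisymm (hContent_le_of_subset_cube hδ0 Q subset_rfl) (le_hContent_cube hδ0 hδn Q)

/-! ### Choquet integral lemmas -/

lemma measurable_phi (f : (Fin n → ℝ) → ℝ) (E : Set (Fin n → ℝ)) :
    Measurable fun t : ℝ => hContent n δ {x | x ∈ E ∧ t < f x} :=
  Antitone.measurable fun s t hst =>
    hContent_mono fun x hx => ⟨hx.1, lt_of_le_of_lt hst hx.2⟩

lemma integH_mono_set {f : (Fin n → ℝ) → ℝ} {E F : Set (Fin n → ℝ)} (h : E ⊆ F) :
    integH n δ f E ≤ integH n δ f F :=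
  lintegral_mono fun t => hContent_mono fun x hx => ⟨h hx.1, hx.2⟩

lemma integH_mono_fun {f g : (Fin n → ℝ) → ℝ} {E : Set (Fin n → ℝ)}
    (h : ∀ x ∈ E, f x ≤ g x) : integH n δ f E ≤ integH n δ g E :=
  lintegral_mono fun t => hContent_mono fun x hx => ⟨hx.1, lt_of_lt_of_le hx.2 (h x hx.1)⟩

lemma lintegral_Ioi_comp_const_mul {φ : ℝ → ℝ≥0∞} (hφ : Measurable φ) {a : ℝ} (ha : 0 < a) :
    ∫⁻ t in Ioi (0:ℝ), φ (a * t) = ENNReal.ofReal a⁻¹ * ∫⁻ t in Ioi (0:ℝ), φ t := by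
  have hm : Measurable fun t : ℝ => a * t := measurable_id.const_mul a
  have hpre : (a * ·) ⁻¹' (Ioi (0:ℝ)) = Ioi 0 := by
    ext t
    simp only [Set.mem_preimage, Set.mem_Ioi]
    constructor
    · intro h; nlinarith
    · intro h; positivity
  have h1 : ∫⁻ t in Ioi (0:ℝ), φ (a * t) =
      ∫⁻ s, φ s ∂(Measure.map (a * ·) (volume.restrict (Ioi 0))) :=
    (lintegral_map hφ hm).symm
  rw [h1, ← hpre, ← Measure.restrict_map hm measurableSet_Ioi,
    Real.map_volume_mul_left (ne_of_gt ha), hpre]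
  rw [Measure.restrict_smul, lintegral_smul_measure, abs_of_pos (inv_pos.2 ha)]
  rw [smul_eq_mul]

lemma integH_const_mul (f : (Fin n → ℝ) → ℝ) (E : Set (Fin n → ℝ)) {a : ℝ} (ha : 0 < a) :
    integH n δ (fun x => a * f x) E = ENNReal.ofReal a * integH n δ f E := by
  have hset : ∀ t : ℝ, {x | x ∈ E ∧ t < a * f x} = {x | x ∈ E ∧ a⁻¹ * t < f x} := by
    intro t
    ext x
    simp only [Set.mem_setOf_eq, and_congr_right_iff]
    intro _
    constructor
    · intro h
      have := (mul_lt_mul_iff_right₀ (inv_pos.2 ha)).2 h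
      rwa [inv_mul_cancel_left₀ ha.ne'] at this
    · intro h
      have := (mul_lt_mul_iff_right₀ ha).2 h
      rwa [mul_inv_cancel_left₀ ha.ne'] at this
  have : integH n δ (fun x => a * f x) E =
      ∫⁻ t in Ioi (0:ℝ), (fun s => hContent n δ {x | x ∈ E ∧ s < f x}) (a⁻¹ * t) := by
    rw [integH]
    exact lintegral_congr fun t => by rw [hset t]
  rw [this, lintegral_Ioi_comp_const_mul (measurable_phi f E) (inv_pos.2 ha), inv_inv]
  rfl

lemma integH_max_le (hδ0 : 0 < δ) (f g : (Fin n → ℝ) → ℝ) (E : Set (Fin n → ℝ)) :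
    integH n δ (fun x => max (f x) (g x)) E ≤ integH n δ f E + integH n δ g E := by
  rw [integH, integH, integH, ← lintegral_add_left (measurable_phi f E)]
  refine lintegral_mono fun t => ?_
  have hsub : {x | x ∈ E ∧ t < max (f x) (g x)} ⊆
      {x | x ∈ E ∧ t < f x} ∪ {x | x ∈ E ∧ t < g x} := by
    intro x ⟨hxE, hxt⟩
    rcases lt_max_iff.1 hxt with h | h
    · exact Or.inl ⟨hxE, h⟩
    · exact Or.inr ⟨hxE, h⟩
  exact (hContent_mono hsub).trans (hContent_union_le hδ0 _ _)

lemma integH_add_le (hδ0 : 0 < δ) (f g : (Fin n → ℝ) → ℝ) (E : Set (Fin n → ℝ)) :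
    integH n δ (fun x => f x + g x) E ≤ 2 * integH n δ f E + 2 * integH n δ g E := by
  have h1 : integH n δ (fun x => f x + g x) E ≤
      integH n δ (fun x => 2 * max (f x) (g x)) E :=
    integH_mono_fun fun x _ => by
      have h1 := le_max_left (f x) (g x)
      have h2 := le_max_right (f x) (g x)
      linarith
  refine h1.trans ?_
  rw [integH_const_mul _ _ (by norm_num : (0:ℝ) < 2)]
  have h2 : ENNReal.ofReal (2:ℝ) = 2 := by norm_num
  rw [h2, ← mul_add]
  exact mul_le_mul_right (integH_max_le hδ0 f g E) 2

lemma chebyshev (f : (Fin n → ℝ) → ℝ) (E : Set (Fin n → ℝ)) {s : ℝ} (hs : 0 < s) :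
    ENNReal.ofReal s * hContent n δ {x | x ∈ E ∧ s < f x} ≤ integH n δ f E := by
  have h1 : ∫⁻ _ in Ioc (0:ℝ) s, hContent n δ {x | x ∈ E ∧ s < f x} ≤
      ∫⁻ t in Ioc (0:ℝ) s, hContent n δ {x | x ∈ E ∧ t < f x} := by
    refine setLIntegral_mono (measurable_phi f E) fun t ht => ?_
    exact hContent_mono fun x hx => ⟨hx.1, lt_of_le_of_lt ht.2 hx.2⟩
  have h2 : ∫⁻ t in Ioc (0:ℝ) s, hContent n δ {x | x ∈ E ∧ t < f x} ≤ integH n δ f E :=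
    lintegral_mono' (Measure.restrict_mono Set.Ioc_subset_Ioi_self le_rfl) le_rfl
  refine le_trans ?_ (h1.trans h2)
  rw [setLIntegral_const, Real.volume_Ioc, sub_zero, mul_comm]

/-- Removing a null set. -/
lemma integH_le_inter (hδ0 : 0 < δ) {W : Set (Fin n → ℝ)} (hW : hContent n δ Wᶜ = 0)
    (f : (Fin n → ℝ) → ℝ) (E : Set (Fin n → ℝ)) :
    integH n δ f E ≤ integH n δ f (E ∩ W) := by
  refine lintegral_mono fun t => ?_
  have hsub : {x | x ∈ E ∧ t < f x} ⊆ {x | x ∈ E ∩ W ∧ t < f x} ∪ Wᶜ := by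
    intro x ⟨hxE, hxt⟩
    by_cases hxW : x ∈ W
    · exact Or.inl ⟨⟨hxE, hxW⟩, hxt⟩
    · exact Or.inr hxW
  refine (hContent_mono hsub).trans ?_
  refine (hContent_union_le hδ0 _ _).trans ?_
  rw [hW, add_zero]

end ApBmoAux2

namespace ApBmoAux3
open ApBmoAux ApBmoAux2 Real
open scoped NNReal

variable {n : ℕ} {δ : ℝ}

/-- Pointwise inequality `|log x − c| ≤ e^{−c}x + q⁻¹e^{qc}x^{−q}`. -/
lemma abs_log_sub_le {x c q : ℝ} (hx : 0 < x) (hq : 0 < q) :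
    |Real.log x - c| ≤ Real.exp (-c) * x + q⁻¹ * (Real.exp (q * c) * x ^ (-q)) := by
  have hx1 : Real.exp (-c) * x = Real.exp (Real.log x - c) := by
    rw [Real.exp_sub, Real.exp_log hx, Real.exp_neg]; ring
  have hx2 : Real.exp (q * c) * x ^ (-q) = Real.exp (q * (c - Real.log x)) := by
    rw [Real.rpow_def_of_pos hx, ← Real.exp_add]; ring_nf
  have hp1 : (0:ℝ) < Real.exp (-c) * x := mul_pos (Real.exp_pos _) hx
  have hp2 : (0:ℝ) < q⁻¹ * (Real.exp (q * c) * x ^ (-q)) :=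
    mul_pos (inv_pos.2 hq) (mul_pos (Real.exp_pos _) (Real.rpow_pos_of_pos hx _))
  rcases abs_cases (Real.log x - c) with ⟨he, _⟩ | ⟨he, _⟩ <;> rw [he]
  · have h := Real.add_one_le_exp (Real.log x - c)
    rw [← hx1] at h
    linarith
  · have h := Real.add_one_le_exp (q * (c - Real.log x))
    rw [← hx2] at h
    have h2 : q * (c - Real.log x) ≤ Real.exp (q * c) * x ^ (-q) := by linarith
    have h3 : -(Real.log x - c) = q⁻¹ * (q * (c - Real.log x)) := by
      field_simp
      ring
    rw [h3]
    have := (mul_le_mul_iff_right₀ (inv_pos.2 hq)).2 h2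
    linarith
  

/-- If `g > 0` on `W` and `Wᶜ` is null, then `∫_Q g > 0`. -/
lemma integH_ne_zero (hδ0 : 0 < δ) (hδn : δ ≤ n) {g : (Fin n → ℝ) → ℝ}
    {W : Set (Fin n → ℝ)} (hW : hContent n δ Wᶜ = 0)
    (hg : ∀ x ∈ W, 0 < g x) (Q : Cube n) : integH n δ g Q.toSet ≠ 0 := by
  intro h0
  set φ := fun t : ℝ => hContent n δ {x | x ∈ Q.toSet ∧ t < g x} with hφ
  have hmeas := measurable_phi (δ := δ) g Q.toSet
  have hae : φ =ᵐ[volume.restrict (Ioi (0:ℝ))] 0 := by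
    rw [← lintegral_eq_zero_iff hmeas]
    exact h0
  have hzero : ∀ t : ℝ, 0 < t → φ t = 0 := by
    intro t ht
    by_contra hne
    have hsub : Ioc (0:ℝ) t ⊆ {s | φ s ≠ 0} ∩ Ioi 0 := by
      intro s hs
      refine ⟨fun h => hne ?_, hs.1⟩
      have : φ t ≤ φ s := hContent_mono fun x hx => ⟨hx.1, lt_of_le_of_lt hs.2 hx.2⟩
      exact le_antisymm (h ▸ this) (zero_le)
    have hmeas0 : volume ({s | φ s ≠ 0} ∩ Ioi (0:ℝ)) = 0 := by
      have h := hae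
      rw [Filter.EventuallyEq, ae_iff] at h
      simp only [Pi.zero_apply] at h
      have hset : {a : ℝ | ¬ φ a = 0} = (φ ⁻¹' {0})ᶜ := by
        ext a; simp [Set.mem_preimage]
      rw [hset, Measure.restrict_apply ((hmeas (measurableSet_singleton 0)).compl)] at h
      have hset2 : {s : ℝ | φ s ≠ 0} = (φ ⁻¹' {0})ᶜ := hset
      rw [hset2]
      exact h
    have : volume (Ioc (0:ℝ) t) = 0 :=
      le_antisymm (le_trans (measure_mono hsub) hmeas0.le) (zero_le)
    rw [Real.volume_Ioc] at this
    simp only [ENNReal.ofReal_eq_zero, sub_zero] at this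
    linarith
  -- Q ∩ W is contained in the union of the superlevel sets at 1/(k+1)
  have hcov : Q.toSet ∩ W ⊆ ⋃ k : ℕ, {x | x ∈ Q.toSet ∧ ((k:ℝ)+1)⁻¹ < g x} := by
    rintro x ⟨hxQ, hxW⟩
    obtain ⟨k, hk⟩ := exists_nat_gt (g x)⁻¹
    refine Set.mem_iUnion.2 ⟨k, hxQ, ?_⟩
    have hgx := hg x hxW
    have hklt : (g x)⁻¹ < (k:ℝ) + 1 := by linarith
    have := (inv_lt_inv₀ (by positivity) (inv_pos.2 hgx)).2 hklt
    rwa [inv_inv] at this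
  have hQW : hContent n δ (Q.toSet ∩ W) = 0 := by
    refine le_antisymm ((hContent_mono hcov).trans ?_) (zero_le)
    refine (hContent_iUnion_le hδ0 _).trans ?_
    have : ∀ k : ℕ, hContent n δ {x | x ∈ Q.toSet ∧ ((k:ℝ)+1)⁻¹ < g x} = 0 := fun k =>
      hzero _ (by positivity)
    simp [this]
  have hQ : hContent n δ Q.toSet = 0 := by
    have hsub : Q.toSet ⊆ (Q.toSet ∩ W) ∪ Wᶜ := by
      intro x hx
      by_cases hxW : x ∈ W
      · exact Or.inl ⟨hx, hxW⟩
      · exact Or.inr hxW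
    refine le_antisymm ((hContent_mono hsub).trans
      ((hContent_union_le hδ0 _ _).trans ?_)) (zero_le)
    rw [hQW, hW, add_zero]
  rw [hContent_cube hδ0 hδn] at hQ
  simp only [ENNReal.ofReal_eq_zero, not_le] at hQ
  exact absurd hQ (not_le.2 (Real.rpow_pos_of_pos Q.side_pos δ))

/-- An open set of small content containing a null set. -/
lemma exists_open_superset (hδ0 : 0 < δ) {N : Set (Fin n → ℝ)} (hN : hContent n δ N = 0)
    {ε : ℝ} (hε : 0 < ε) :
    ∃ O : Set (Fin n → ℝ), IsOpen O ∧ N ⊆ O ∧ hContent n δ O < ENNReal.ofReal ε := by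
  set c : ℝ := (2:ℝ) ^ δ with hc
  have hcpos : 0 < c := Real.rpow_pos_of_pos (by norm_num) δ
  have hlt : hContent n δ N < ENNReal.ofReal (ε / (2 * c)) := by
    rw [hN]; simp [ENNReal.ofReal_pos]; positivity
  rw [hContent, iInf_lt_iff] at hlt
  obtain ⟨Qs, hQs⟩ := hlt
  rw [iInf_lt_iff] at hQs
  obtain ⟨hcov, hsum⟩ := hQs
  set O : Set (Fin n → ℝ) := ⋃ i, Set.pi Set.univ fun j =>
    Ioo ((Qs i).corner j - (Qs i).side) ((Qs i).corner j + (Qs i).side) with hO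
  refine ⟨O, isOpen_iUnion fun i => isOpen_set_pi Set.finite_univ fun j _ => isOpen_Ioo, ?_, ?_⟩
  · intro x hx
    obtain ⟨i, hi⟩ := Set.mem_iUnion.1 (hcov hx)
    refine Set.mem_iUnion.2 ⟨i, ?_⟩
    intro j _
    obtain ⟨h1, h2⟩ := hi j
    constructor <;> [linarith [(Qs i).side_pos] ; linarith]
  · refine lt_of_le_of_lt ((hContent_iUnion_le hδ0 _).trans ?_)
      (?_ : ∑' i, ENNReal.ofReal (((2:ℝ) * (Qs i).side) ^ δ) < ENNReal.ofReal ε)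
    · refine ENNReal.tsum_le_tsum fun i => ?_
      refine hContent_le_of_subset_cube hδ0
        ⟨fun j => (Qs i).corner j - (Qs i).side, 2 * (Qs i).side,
          by have := (Qs i).side_pos; linarith⟩ ?_
      intro x hx j
      obtain ⟨h1, h2⟩ := hx j (Set.mem_univ j)
      constructor
      · simpa using h1.le
      · simp only []
        linarith
    · have hterm : ∀ i, ENNReal.ofReal (((2:ℝ) * (Qs i).side) ^ δ) =
          ENNReal.ofReal c * ENNReal.ofReal ((Qs i).side ^ δ) := by
        intro i
        rw [Real.mul_rpow (by norm_num) (Qs i).side_pos.le, ← ENNReal.ofReal_mul hcpos.le]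
      simp only [hterm]
      rw [ENNReal.tsum_mul_left]
      calc ENNReal.ofReal c * ∑' i, ENNReal.ofReal ((Qs i).side ^ δ)
          < ENNReal.ofReal c * ENNReal.ofReal (ε / (2 * c)) := by
            refine ENNReal.mul_lt_mul_right ?_ ?_ hsum
            · simp [ENNReal.ofReal_eq_zero, not_le, hcpos]
            · exact ENNReal.ofReal_ne_top
        _ ≤ ENNReal.ofReal ε := by
            rw [← ENNReal.ofReal_mul hcpos.le]
            refine ENNReal.ofReal_le_ofReal ?_
            have heq : c * (ε / (2 * c)) = ε / 2 := by field_simp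
            rw [heq]; linarith
  

end ApBmoAux3

namespace ApBmoAux4
open ApBmoAux ApBmoAux2 ApBmoAux3 Real
open scoped NNReal

variable {n : ℕ} {δ p : ℝ}

lemma hW_of (hw : IsWeight n δ w) : hContent n δ {x | 0 < w x}ᶜ = 0 := by
  rw [Set.compl_setOf]; exact hw.2

/-- The basic finiteness/nondegeneracy facts on a cube. -/
lemma cube_facts (hδ0 : 0 < δ) (hδn : δ ≤ n) (hp : 1 < p)
    {w : (Fin n → ℝ) → ℝ} (hw : MemAp n δ p w) (Q : Cube n) :
    integH n δ w Q.toSet ≠ 0 ∧ integH n δ w Q.toSet ≠ ⊤ ∧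
    integH n δ (fun x => w x ^ (-(1/(p-1)))) Q.toSet ≠ 0 ∧
    integH n δ (fun x => w x ^ (-(1/(p-1)))) Q.toSet ≠ ⊤ := by
  have hW : hContent n δ {x | 0 < w x}ᶜ = 0 := hW_of hw.1
  have hIw0 : integH n δ w Q.toSet ≠ 0 :=
    integH_ne_zero hδ0 hδn hW (fun x hx => hx) Q
  have hIσ0 : integH n δ (fun x => w x ^ (-(1/(p-1)))) Q.toSet ≠ 0 :=
    integH_ne_zero hδ0 hδn hW (fun x hx => Real.rpow_pos_of_pos hx _) Q
  have hIwT : integH n δ w Q.toSet ≠ ⊤ := by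
    have hcomp : IsCompact (Icc Q.corner (fun i => Q.corner i + Q.side)) := isCompact_Icc
    have hsub : Q.toSet ⊆ Icc Q.corner (fun i => Q.corner i + Q.side) := by
      intro x hx
      rw [Set.mem_Icc]
      exact ⟨fun i => (hx i).1, fun i => (hx i).2.le⟩
    have h1 : integH n δ w Q.toSet ≤
        integH n δ (fun x => |w x|) (Icc Q.corner (fun i => Q.corner i + Q.side)) :=
      le_trans (integH_mono_fun fun x _ => le_abs_self _) (integH_mono_set hsub)
    exact (lt_of_le_of_lt h1 (hw.1.1.2 _ hcomp)).ne
  refine ⟨hIw0, hIwT, hIσ0, ?_⟩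
  -- finiteness of the dual integral from finiteness of the Ap constant
  intro hIσT
  have hh : hContent n δ Q.toSet = ENNReal.ofReal (Q.side ^ δ) := hContent_cube hδ0 hδn Q
  have hhT : hContent n δ Q.toSet ≠ ⊤ := by rw [hh]; exact ENNReal.ofReal_ne_top
  have hB : integH n δ (fun x => w x ^ (-(1/(p-1)))) Q.toSet / hContent n δ Q.toSet = ⊤ :=
    ENNReal.div_eq_top.2 (Or.inr ⟨hIσT, hhT⟩)
  have hA : integH n δ w Q.toSet / hContent n δ Q.toSet ≠ 0 := by
    rw [Ne, ENNReal.div_eq_zero_iff]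
    push_neg
    exact ⟨hIw0, hhT⟩
  have hK : (integH n δ w Q.toSet / hContent n δ Q.toSet) *
      (integH n δ (fun x => w x ^ (-(1/(p-1)))) Q.toSet / hContent n δ Q.toSet) ^ (p-1) ≤
        apConst n δ p w :=
    le_iSup (fun Q : Cube n => (integH n δ w Q.toSet / hContent n δ Q.toSet) *
      (integH n δ (fun x => w x ^ (-(1 / (p - 1)))) Q.toSet / hContent n δ Q.toSet) ^ (p - 1)) Q
  rw [hB, ENNReal.top_rpow_of_pos (by linarith), ENNReal.mul_top hA] at hK
  exact absurd (lt_of_le_of_lt hK hw.2) (lt_irrefl ⊤)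

/-- The key integral bound for `|log w − log λ|`. -/
lemma integH_log_bound (hδ0 : 0 < δ) {w : (Fin n → ℝ) → ℝ} {q : ℝ} (hq : 0 < q)
    (hW : hContent n δ {x | 0 < w x}ᶜ = 0) {lam : ℝ} (hlam : 0 < lam)
    (E : Set (Fin n → ℝ)) :
    integH n δ (fun x => |Real.log (w x) - Real.log lam|) E ≤
      2 * (ENNReal.ofReal lam⁻¹ * integH n δ w E) +
      2 * (ENNReal.ofReal (q⁻¹ * lam ^ q) * integH n δ (fun x => w x ^ (-q)) E) := by
  have hcoef : (0:ℝ) < q⁻¹ * lam ^ q :=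
    mul_pos (inv_pos.2 hq) (Real.rpow_pos_of_pos hlam q)
  have hpoint : ∀ x ∈ E ∩ {x | 0 < w x},
      |Real.log (w x) - Real.log lam| ≤ lam⁻¹ * w x + (q⁻¹ * lam ^ q) * w x ^ (-q) := by
    intro x hx
    have h1 := abs_log_sub_le (x := w x) (c := Real.log lam) hx.2 hq
    have h2 : Real.exp (-Real.log lam) = lam⁻¹ := by rw [Real.exp_neg, Real.exp_log hlam]
    have h3 : Real.exp (q * Real.log lam) = lam ^ q := by
      rw [Real.rpow_def_of_pos hlam, mul_comm]
    rw [h2, h3] at h1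
    calc |Real.log (w x) - Real.log lam| ≤
        lam⁻¹ * w x + q⁻¹ * (lam ^ q * w x ^ (-q)) := h1
      _ = lam⁻¹ * w x + (q⁻¹ * lam ^ q) * w x ^ (-q) := by ring
  calc integH n δ (fun x => |Real.log (w x) - Real.log lam|) E
      ≤ integH n δ (fun x => |Real.log (w x) - Real.log lam|) (E ∩ {x | 0 < w x}) :=
        integH_le_inter hδ0 hW _ _
    _ ≤ integH n δ (fun x => lam⁻¹ * w x + (q⁻¹ * lam ^ q) * w x ^ (-q))
          (E ∩ {x | 0 < w x}) := integH_mono_fun hpoint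
    _ ≤ integH n δ (fun x => lam⁻¹ * w x + (q⁻¹ * lam ^ q) * w x ^ (-q)) E :=
        integH_mono_set Set.inter_subset_left
    _ ≤ 2 * integH n δ (fun x => lam⁻¹ * w x) E +
          2 * integH n δ (fun x => (q⁻¹ * lam ^ q) * w x ^ (-q)) E :=
        integH_add_le hδ0 _ _ _
    _ = 2 * (ENNReal.ofReal lam⁻¹ * integH n δ w E) +
          2 * (ENNReal.ofReal (q⁻¹ * lam ^ q) * integH n δ (fun x => w x ^ (-q)) E) := by
        rw [integH_const_mul _ _ (inv_pos.2 hlam), integH_const_mul _ _ hcoef]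

end ApBmoAux4

namespace ApBmoAux5
open ApBmoAux ApBmoAux2 ApBmoAux3 ApBmoAux4 Real
open scoped NNReal

variable {n : ℕ} {δ p : ℝ}

set_option maxHeartbeats 1000000 in
lemma key_bound (hδ0 : 0 < δ) (hδn : δ ≤ n) (hp : 1 < p) {q c0 e1 m M C : ℝ}
    (hqd : q = 1/(p-1)) (hc0d : c0 = ((2:ℝ)^(-q-2))^q⁻¹) (he1d : e1 = q/(1+q))
    (hmd : m = max 1 q) (hMd : M = max 1 (c0 ^ (e1 - m))) (hCd : C = (2 + 2*q⁻¹) * M)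
    {w : (Fin n → ℝ) → ℝ} (hw : MemAp n δ p w) (Q : Cube n) :
    (⨅ c : ℝ, integH n δ (fun x => |Real.log (w x) - c|) Q.toSet / hContent n δ Q.toSet)
      ≤ ENNReal.ofReal C * apConst n δ p w ^ m := by
  have hq : 0 < q := by rw [hqd]; exact div_pos one_pos (by linarith)
  have hqinv : q⁻¹ = p - 1 := by rw [hqd, one_div, inv_inv]
  have hq1 : (0:ℝ) < 1 + q := by linarith
  have hc0pos : 0 < c0 := by
    rw [hc0d]; exact Real.rpow_pos_of_pos (Real.rpow_pos_of_pos two_pos _) _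
  have hm1 : (1:ℝ) ≤ m := hmd ▸ le_max_left _ _
  have he1m : e1 ≤ m := by
    rw [he1d]
    refine le_trans (le_of_lt ((div_lt_one hq1).2 (by linarith))) hm1
  have hW : hContent n δ {x | 0 < w x}ᶜ = 0 := hW_of hw.1
  obtain ⟨hIw0, hIwT, hIσ0, hIσT⟩ := cube_facts hδ0 hδn hp hw Q
  rw [show -(1/(p-1)) = -q by rw [hqd]] at hIσ0 hIσT
  have hKT : apConst n δ p w ≠ ⊤ := hw.2.ne
  -- content of the cube
  have hh : hContent n δ Q.toSet = ENNReal.ofReal (Q.side ^ δ) := hContent_cube hδ0 hδn Q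
  set h0 : ℝ := Q.side ^ δ with hh0d
  have h0pos : 0 < h0 := Real.rpow_pos_of_pos Q.side_pos δ
  have hhT : hContent n δ Q.toSet ≠ ⊤ := by rw [hh]; exact ENNReal.ofReal_ne_top
  have hh0' : hContent n δ Q.toSet ≠ 0 := by
    rw [hh]; simp only [Ne, ENNReal.ofReal_eq_zero, not_le]; exact h0pos
  set Iw := integH n δ w Q.toSet with hIwd
  set Iσ := integH n δ (fun x => w x ^ (-q)) Q.toSet with hIσd
  set a : ℝ := Iw.toReal with had
  set b : ℝ := Iσ.toReal with hbd
  have ha : 0 < a := ENNReal.toReal_pos hIw0 hIwT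
  have hb : 0 < b := ENNReal.toReal_pos hIσ0 hIσT
  set α : ℝ := a / h0 with hαd
  set β : ℝ := b / h0 with hβd
  have hα : 0 < α := div_pos ha h0pos
  have hβ : 0 < β := div_pos hb h0pos
  have hIwr : Iw = ENNReal.ofReal a := (ENNReal.ofReal_toReal hIwT).symm
  have hIσr : Iσ = ENNReal.ofReal b := (ENNReal.ofReal_toReal hIσT).symm
  -- the Ap constant bound
  have happ : apConst n δ p w = ⨆ R : Cube n,
      ((integH n δ w R.toSet / hContent n δ R.toSet) *
        (integH n δ (fun x => w x ^ (-q)) R.toSet / hContent n δ R.toSet) ^ (p - 1)) := by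
    unfold apConst
    congr 1
    funext R
    rw [show -(1/(p-1)) = -q by rw [hqd]]
  have hK : (Iw / hContent n δ Q.toSet) * (Iσ / hContent n δ Q.toSet) ^ (p-1) ≤
      apConst n δ p w := by
    rw [happ]
    exact le_iSup (fun R : Cube n => (integH n δ w R.toSet / hContent n δ R.toSet) *
      (integH n δ (fun x => w x ^ (-q)) R.toSet / hContent n δ R.toSet) ^ (p - 1)) Q
  set κ : ℝ := (apConst n δ p w).toReal with hκd
  have hhtr : (hContent n δ Q.toSet).toReal = h0 := by
    rw [hh]; exact ENNReal.toReal_ofReal h0pos.le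
  have hκineq : α * β ^ (p-1) ≤ κ := by
    have h1 := ENNReal.toReal_mono hKT hK
    rw [ENNReal.toReal_mul, ENNReal.toReal_div, ← ENNReal.toReal_rpow, ENNReal.toReal_div,
      hhtr] at h1
    exact h1
  set γ : ℝ := α * β ^ q⁻¹ with hγd
  have hγpos : 0 < γ := mul_pos hα (Real.rpow_pos_of_pos hβ _)
  have hγκ : γ ≤ κ := by rw [hγd, hqinv]; exact hκineq
  have hκpos : 0 < κ := lt_of_lt_of_le hγpos hγκ
  -- Chebyshev lower bound: h0 ≤ a/s + 2 b s^q for every s > 0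
  have hcheb : ∀ s : ℝ, 0 < s → h0 ≤ a / s + 2 * b * s ^ q := by
    intro s hs
    have hsq : (0:ℝ) < s ^ q := Real.rpow_pos_of_pos hs q
    set s' : ℝ := s ^ (-q) / 2 with hs'd
    have hs'pos : 0 < s' := div_pos (Real.rpow_pos_of_pos hs _) two_pos
    have hsub : Q.toSet ⊆ {x | x ∈ Q.toSet ∧ s < w x} ∪
        ({x | x ∈ Q.toSet ∧ s' < w x ^ (-q)} ∪ {x | 0 < w x}ᶜ) := by
      intro x hx
      by_cases h1 : s < w x
      · exact Or.inl ⟨hx, h1⟩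
      by_cases h2 : 0 < w x
      · refine Or.inr (Or.inl ⟨hx, ?_⟩)
        push_neg at h1
        have h3 : s ^ (-q) ≤ w x ^ (-q) :=
          Real.rpow_le_rpow_of_nonpos h2 h1 (by linarith)
        have h4 : s' < s ^ (-q) := by
          rw [hs'd]; linarith [Real.rpow_pos_of_pos hs (-q)]
        linarith
      · exact Or.inr (Or.inr h2)
    have hE1 := chebyshev (δ := δ) w Q.toSet hs
    have hE2 := chebyshev (δ := δ) (fun x => w x ^ (-q)) Q.toSet hs'pos
    have hdiv1 : hContent n δ {x | x ∈ Q.toSet ∧ s < w x} ≤ Iw / ENNReal.ofReal s := by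
      rw [ENNReal.le_div_iff_mul_le
        (Or.inl (by simp only [Ne, ENNReal.ofReal_eq_zero, not_le]; exact hs))
        (Or.inl ENNReal.ofReal_ne_top), mul_comm]
      exact hE1
    have hdiv2 : hContent n δ {x | x ∈ Q.toSet ∧ s' < w x ^ (-q)} ≤
        Iσ / ENNReal.ofReal s' := by
      rw [ENNReal.le_div_iff_mul_le
        (Or.inl (by simp only [Ne, ENNReal.ofReal_eq_zero, not_le]; exact hs'pos))
        (Or.inl ENNReal.ofReal_ne_top), mul_comm]
      exact hE2
    have hhle : hContent n δ Q.toSet ≤ Iw / ENNReal.ofReal s + Iσ / ENNReal.ofReal s' := by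
      refine (hContent_mono hsub).trans ((hContent_union_le hδ0 _ _).trans ?_)
      refine add_le_add hdiv1 ((hContent_union_le hδ0 _ _).trans ?_)
      rw [hW, add_zero]
      exact hdiv2
    have hfin1 : Iw / ENNReal.ofReal s ≠ ⊤ :=
      (ENNReal.div_lt_top hIwT (by simp only [Ne, ENNReal.ofReal_eq_zero, not_le]; exact hs)).ne
    have hfin2 : Iσ / ENNReal.ofReal s' ≠ ⊤ :=
      (ENNReal.div_lt_top hIσT
        (by simp only [Ne, ENNReal.ofReal_eq_zero, not_le]; exact hs'pos)).ne
    have h1 := ENNReal.toReal_mono (by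
      rw [Ne, ENNReal.add_eq_top]; push_neg; exact ⟨hfin1, hfin2⟩) hhle
    rw [ENNReal.toReal_add hfin1 hfin2, ENNReal.toReal_div, ENNReal.toReal_div,
      ENNReal.toReal_ofReal hs.le, ENNReal.toReal_ofReal hs'pos.le, hhtr] at h1
    have h2 : b / s' = 2 * b * s ^ q := by
      rw [hs'd, Real.rpow_neg hs.le]
      field_simp
    rw [h2] at h1
    exact h1
  -- lower bound on γ
  have hγc : c0 ≤ γ := by
    have h1 := hcheb (2 * a / h0) (by positivity)
    have h2 : a / (2 * a / h0) = h0 / 2 := by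
      field_simp
    rw [h2] at h1
    have h3 : h0 / 2 ≤ 2 * b * (2 * a / h0) ^ q := by linarith
    have h4 : (2 * a / h0) ^ q = 2 ^ q * α ^ q := by
      rw [mul_div_assoc, Real.mul_rpow (by norm_num) hα.le]
    rw [h4] at h3
    have hbval : b = β * h0 := (div_mul_cancel₀ b h0pos.ne').symm
    rw [hbval] at h3
    have h6 : (1:ℝ)/2 ≤ 2 * β * (2 ^ q * α ^ q) := by
      rw [show 2 * (β * h0) * (2 ^ q * α ^ q) = h0 * (2 * β * (2 ^ q * α ^ q)) by ring,
        show h0 / 2 = h0 * (1/2) by ring] at h3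
      exact (mul_le_mul_iff_right₀ h0pos).1 h3
    have h2q : (0:ℝ) < 2 ^ q := Real.rpow_pos_of_pos two_pos q
    have h8 : (2:ℝ)^(-q-2) * (2 * 2 ^ q) = 1/2 := by
      rw [show (2:ℝ)^(-q-2) * (2 * 2 ^ q) = 2 ^ (-q-2) * 2 ^ (1:ℝ) * 2 ^ q by
        rw [Real.rpow_one]; ring, ← Real.rpow_add two_pos, ← Real.rpow_add two_pos,
        show -q-2+1+q = (-1:ℝ) by ring, Real.rpow_neg_one]
      norm_num
    have h5 : (2:ℝ) ^ (-q-2) ≤ α ^ q * β := by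
      rw [show (2:ℝ)^(-q-2) = 1/2 / (2 * 2 ^ q) by
        rw [← h8]; field_simp, div_le_iff₀ (by positivity)]
      calc (1:ℝ)/2 ≤ 2 * β * (2 ^ q * α ^ q) := h6
        _ = α ^ q * β * (2 * 2 ^ q) := by ring
    have hγpow : γ ^ q = α ^ q * β := by
      rw [hγd, Real.mul_rpow hα.le (Real.rpow_pos_of_pos hβ _).le, ← Real.rpow_mul hβ.le,
        inv_mul_cancel₀ hq.ne', Real.rpow_one]
    rw [hc0d]
    calc ((2:ℝ)^(-q-2)) ^ q⁻¹ ≤ (γ ^ q) ^ q⁻¹ :=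
          Real.rpow_le_rpow (Real.rpow_pos_of_pos two_pos _).le (hγpow ▸ h5) (inv_pos.2 hq).le
      _ = γ := by rw [← Real.rpow_mul hγpos.le, mul_inv_cancel₀ hq.ne', Real.rpow_one]
  -- choose λ
  set lam : ℝ := (α / β) ^ ((1+q)⁻¹ : ℝ) with hlamd
  have hlampos : 0 < lam := Real.rpow_pos_of_pos (div_pos hα hβ) _
  have hXpos : 0 < γ ^ e1 := Real.rpow_pos_of_pos hγpos _
  have hlog_lam : Real.log lam = (1+q)⁻¹ * (Real.log α - Real.log β) := by
    rw [hlamd, Real.log_rpow (div_pos hα hβ), Real.log_div hα.ne' hβ.ne']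
  have hlogγ : Real.log γ = Real.log α + q⁻¹ * Real.log β := by
    rw [hγd, Real.log_mul hα.ne' (Real.rpow_pos_of_pos hβ _).ne', Real.log_rpow hβ]
  have id1 : lam⁻¹ * α = γ ^ e1 := by
    have hpos1 : 0 < lam⁻¹ * α := mul_pos (inv_pos.2 hlampos) hα
    rw [← Real.exp_log hpos1, ← Real.exp_log hXpos]
    congr 1
    rw [Real.log_mul (inv_ne_zero hlampos.ne') hα.ne', Real.log_inv, hlog_lam,
      Real.log_rpow hγpos, hlogγ, he1d]
    field_simp
    ring
  have id2 : lam ^ q * β = γ ^ e1 := by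
    have hpos2 : 0 < lam ^ q * β := mul_pos (Real.rpow_pos_of_pos hlampos _) hβ
    rw [← Real.exp_log hpos2, ← Real.exp_log hXpos]
    congr 1
    rw [Real.log_mul (Real.rpow_pos_of_pos hlampos _).ne' hβ.ne', Real.log_rpow hlampos,
      hlog_lam, Real.log_rpow hγpos, hlogγ, he1d]
    field_simp
    ring
  -- the main estimate
  have hbound := integH_log_bound hδ0 hq hW hlampos Q.toSet
  refine iInf_le_of_le (Real.log lam) ?_
  have hcoef : (0:ℝ) < q⁻¹ * lam ^ q :=
    mul_pos (inv_pos.2 hq) (Real.rpow_pos_of_pos hlampos q)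
  have hdivcomp : (2 * (ENNReal.ofReal lam⁻¹ * Iw) +
      2 * (ENNReal.ofReal (q⁻¹ * lam ^ q) * Iσ)) / hContent n δ Q.toSet =
      ENNReal.ofReal ((2 * (lam⁻¹ * a) + 2 * (q⁻¹ * lam ^ q * b)) / h0) := by
    rw [hIwr, hIσr, hh]
    rw [show (2:ℝ≥0∞) = ENNReal.ofReal 2 by norm_num]
    rw [← ENNReal.ofReal_mul (inv_pos.2 hlampos).le, ← ENNReal.ofReal_mul hcoef.le,
      ← ENNReal.ofReal_mul (by norm_num), ← ENNReal.ofReal_mul (by norm_num),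
      ← ENNReal.ofReal_add (by positivity) (by positivity),
      ← ENNReal.ofReal_div_of_pos h0pos]
  calc integH n δ (fun x => |Real.log (w x) - Real.log lam|) Q.toSet / hContent n δ Q.toSet
      ≤ (2 * (ENNReal.ofReal lam⁻¹ * Iw) +
          2 * (ENNReal.ofReal (q⁻¹ * lam ^ q) * Iσ)) / hContent n δ Q.toSet :=
        ENNReal.div_le_div_right hbound _
    _ = ENNReal.ofReal ((2 * (lam⁻¹ * a) + 2 * (q⁻¹ * lam ^ q * b)) / h0) := hdivcomp
    _ ≤ ENNReal.ofReal (C * κ ^ m) := by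
        refine ENNReal.ofReal_le_ofReal ?_
        have hreal : (2 * (lam⁻¹ * a) + 2 * (q⁻¹ * lam ^ q * b)) / h0 =
            (2 + 2 * q⁻¹) * γ ^ e1 := by
          have ha' : a = α * h0 := (div_mul_cancel₀ a h0pos.ne').symm
          have hb' : b = β * h0 := (div_mul_cancel₀ b h0pos.ne').symm
          rw [ha', hb',
            show 2 * (lam⁻¹ * (α * h0)) + 2 * (q⁻¹ * lam ^ q * (β * h0)) =
              (2 * (lam⁻¹ * α) + 2 * (q⁻¹ * (lam ^ q * β))) * h0 by ring,
            mul_div_cancel_right₀ _ h0pos.ne', id1, id2]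
          ring
        rw [hreal]
        -- γ ^ e1 ≤ M * κ ^ m
        have hm0 : (0:ℝ) ≤ m := by linarith
        have hκm : γ ^ m ≤ κ ^ m := Real.rpow_le_rpow hγpos.le hγκ hm0
        have hstep : γ ^ e1 ≤ M * κ ^ m := by
          rcases le_or_gt 1 γ with hγ1 | hγ1
          · calc γ ^ e1 ≤ γ ^ m := Real.rpow_le_rpow_of_exponent_le hγ1 he1m
              _ ≤ κ ^ m := hκm
              _ ≤ M * κ ^ m := le_mul_of_one_le_left (Real.rpow_nonneg hκpos.le _)
                  (hMd ▸ le_max_left _ _)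
          · have hsplit : γ ^ e1 = γ ^ m * γ ^ (e1 - m) := by
              rw [← Real.rpow_add hγpos]; congr 1; ring
            rw [hsplit]
            have h1 : γ ^ (e1 - m) ≤ c0 ^ (e1 - m) :=
              Real.rpow_le_rpow_of_nonpos hc0pos hγc (by linarith)
            have h2 : c0 ^ (e1-m) ≤ M := hMd ▸ le_max_right _ _
            calc γ ^ m * γ ^ (e1-m) ≤ κ ^ m * M :=
                mul_le_mul hκm (h1.trans h2) (Real.rpow_nonneg hγpos.le _)
                  (Real.rpow_nonneg hκpos.le _)
              _ = M * κ ^ m := mul_comm _ _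
        calc (2 + 2 * q⁻¹) * γ ^ e1 ≤ (2 + 2 * q⁻¹) * (M * κ ^ m) := by
              refine mul_le_mul_of_nonneg_left hstep (by positivity)
          _ = C * κ ^ m := by rw [hCd]; ring
    _ = ENNReal.ofReal C * apConst n δ p w ^ m := by
        have hCpos : 0 ≤ C := by
          rw [hCd]
          have : (1:ℝ) ≤ M := hMd ▸ le_max_left _ _
          nlinarith [inv_pos.2 hq]
        rw [ENNReal.ofReal_mul hCpos, ← ENNReal.ofReal_rpow_of_pos hκpos,
          hκd, ENNReal.ofReal_toReal hKT]

end ApBmoAux5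

/-- A_{p,δ} weights have logarithms in BMO(ℝⁿ, ℋ^δ_∞), quantitatively. -/
theorem stmt0 (n : ℕ) (hn : 1 ≤ n) (δ p : ℝ) (hδ0 : 0 < δ) (hδn : δ ≤ n) (hp : 1 < p) :
    ∃ C : ℝ, 0 < C ∧ ∀ w : (Fin n → ℝ) → ℝ, MemAp n δ p w →
      MemBMO n δ (fun x => Real.log (w x)) ∧
        bmoNorm n δ (fun x => Real.log (w x)) ≤
          ENNReal.ofReal C * apConst n δ p w ^ (max 1 (1 / (p - 1))) := by
  classical
  set q : ℝ := 1 / (p - 1) with hqd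
  have hq : 0 < q := div_pos one_pos (by linarith)
  set c0 : ℝ := ((2:ℝ)^(-q-2))^q⁻¹ with hc0d
  set e1 : ℝ := q / (1 + q) with he1d
  set m : ℝ := max 1 q with hmd
  set M : ℝ := max 1 (c0 ^ (e1 - m)) with hMd
  set C : ℝ := (2 + 2*q⁻¹) * M with hCd
  have hM1 : (1:ℝ) ≤ M := le_max_left _ _
  have hCpos : 0 < C := mul_pos (by positivity) (lt_of_lt_of_le one_pos hM1)
  refine ⟨C, hCpos, fun w hw => ?_⟩
  have hW : hContent n δ {x | 0 < w x}ᶜ = 0 := ApBmoAux4.hW_of hw.1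
  have hKT : apConst n δ p w ≠ ⊤ := hw.2.ne
  have key := fun Q : Cube n =>
    ApBmoAux5.key_bound hδ0 hδn hp hqd hc0d he1d hmd hMd hCd hw Q
  have hbmole : bmoNorm n δ (fun x => Real.log (w x)) ≤
      ENNReal.ofReal C * apConst n δ p w ^ m := by
    simp only [bmoNorm]
    exact iSup_le key
  have hm0 : (0:ℝ) ≤ m := le_trans zero_le_one (le_max_left _ _)
  -- quasicontinuity of log ∘ w
  have hqc : QuasiCont n δ fun x => Real.log (w x) := by
    intro ε hε
    obtain ⟨O1, hO1o, hO1c, hO1cont⟩ := hw.1.1.1 (ε/2) (by linarith)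
    obtain ⟨O2, hO2o, hNsub, hO2c⟩ :=
      ApBmoAux3.exists_open_superset hδ0 hW (ε := ε/2) (by linarith)
    refine ⟨O1 ∪ O2, hO1o.union hO2o, ?_, ?_⟩
    · refine lt_of_le_of_lt (ApBmoAux.hContent_union_le hδ0 _ _) ?_
      refine lt_of_lt_of_le (ENNReal.add_lt_add hO1c hO2c) ?_
      rw [← ENNReal.ofReal_add (by linarith) (by linarith)]
      rw [add_halves]
    · have hsub1 : (O1 ∪ O2)ᶜ ⊆ O1ᶜ := Set.compl_subset_compl.2 Set.subset_union_left
      refine ContinuousOn.comp Real.continuousOn_log (hO1cont.mono hsub1) ?_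
      intro x hx
      have hx2 : x ∉ O2 := fun h => hx (Or.inr h)
      have hpos : 0 < w x := by
        by_contra h
        exact hx2 (hNsub h)
      exact Set.mem_compl_singleton_iff.2 (ne_of_gt hpos)
  -- local integrability of |log ∘ w|
  have hloc : ∀ K : Set (Fin n → ℝ), IsCompact K →
      integH n δ (fun x => |Real.log (w x)|) K < ⊤ := by
    intro K hK
    obtain ⟨r, hr⟩ := hK.isBounded.subset_closedBall 0
    set R : ℝ := |r| + 1 with hR
    have hRpos : 0 < R := by positivity
    set QR : Cube n := ⟨fun _ => -R, 2*R, by positivity⟩ with hQR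
    have hsub : K ⊆ QR.toSet := by
      intro x hx i
      have h1 : dist (x i) ((0 : Fin n → ℝ) i) ≤ dist x 0 := dist_le_pi_dist x 0 i
      have h2 : dist x 0 ≤ r := Metric.mem_closedBall.1 (hr hx)
      have h3 : |x i| ≤ r := by
        simpa [Real.dist_eq] using h1.trans h2
      have h4 : |x i| < R := lt_of_le_of_lt (h3.trans (le_abs_self r)) (by rw [hR]; linarith)
      constructor
      · show -R ≤ x i
        have := neg_abs_le (x i); linarith
      · show x i < -R + 2*R
        have := le_abs_self (x i); linarith
    obtain ⟨_, hIwT, _, hIσT⟩ := ApBmoAux4.cube_facts hδ0 hδn hp hw QR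
    rw [← hqd] at hIσT
    have hbd := ApBmoAux4.integH_log_bound (w := w) hδ0 hq hW one_pos K
    rw [Real.log_one] at hbd
    have hcongr : (fun x : Fin n → ℝ => |Real.log (w x) - 0|) =
        fun x : Fin n → ℝ => |Real.log (w x)| := by
      funext x; rw [sub_zero]
    rw [hcongr] at hbd
    have hmon1 : integH n δ w K ≤ integH n δ w QR.toSet := ApBmoAux2.integH_mono_set hsub
    have hmon2 : integH n δ (fun x => w x ^ (-q)) K ≤
        integH n δ (fun x => w x ^ (-q)) QR.toSet := ApBmoAux2.integH_mono_set hsub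
    refine lt_of_le_of_lt (hbd.trans (add_le_add
      (mul_le_mul_right (mul_le_mul_right hmon1 _) _)
      (mul_le_mul_right (mul_le_mul_right hmon2 _) _))) ?_
    refine ENNReal.add_lt_top.2 ⟨?_, ?_⟩
    · exact ENNReal.mul_lt_top ENNReal.ofNat_ne_top.lt_top
        (ENNReal.mul_lt_top ENNReal.ofReal_lt_top hIwT.lt_top)
    · exact ENNReal.mul_lt_top ENNReal.ofNat_ne_top.lt_top
        (ENNReal.mul_lt_top ENNReal.ofReal_lt_top hIσT.lt_top)
  exact ⟨⟨⟨hqc, hloc⟩, lt_of_le_of_lt hbmole (ENNReal.mul_lt_top ENNReal.ofReal_lt_top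
    (ENNReal.rpow_lt_top_of_nonneg hm0 hKT))⟩, hbmole⟩
end
end

section
/- Let n ≥ 1 be an integer, δ ∈ (0, n], and let K ≥ 1 be a constant such that ℋ^δ_∞(E) ≤ \~ℋ^δ_∞(E) ≤ K · ℋ^δ_∞(E) for every E ⊆ ℝⁿ. Then for every f ∈ BMO(ℝⁿ, ℋ^δ_∞): ‖f‖_{BMO(ℝⁿ,ℋ^δ_∞)} ≤ ‖f‖_{~BMO(ℝⁿ,ℋ^δ_∞)} ≤ (1 + 2K) · ‖f‖_{BMO(ℝⁿ,ℋ^δ_∞)}, where ‖f‖_{~BMO(ℝⁿ,ℋ^δ_∞)} := sup_Q (1/ℋ^δ_∞(Q)) ∫_Q |f − f_{Q,δ}| dℋ^δ_∞, supremum over all cubes Q. -/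
open scoped ENNReal
open Set MeasureTheory

noncomputable section

/-- The mean-based BMO seminorm, taken with respect to the averages `f_{Q,δ}`. -/
def bmoTildeNorm (n : ℕ) (δ : ℝ) (f : (Fin n → ℝ) → ℝ) : ℝ≥0∞ :=
  ⨆ Q : Cube n,
    integH n δ (fun x => |f x - avgQ n δ f Q|) Q.toSet / hContent n δ Q.toSet

section AuxStmt4

open Filter

variable {n : ℕ}

def choq (μ : Set (Fin n → ℝ) → ℝ≥0∞) (g : (Fin n → ℝ) → ℝ) (E : Set (Fin n → ℝ)) : ℝ≥0∞ :=
  ∫⁻ t in Ioi (0:ℝ), μ {x | x ∈ E ∧ t < g x}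

lemma choq_le_choq {μ : Set (Fin n → ℝ) → ℝ≥0∞} (hμ : Monotone μ)
    {g g' : (Fin n → ℝ) → ℝ} {E F : Set (Fin n → ℝ)} (h : ∀ x ∈ E, x ∈ F ∧ g x ≤ g' x) :
    choq μ g E ≤ choq μ g' F :=
  lintegral_mono fun t => hμ fun x hx => ⟨(h x hx.1).1, lt_of_lt_of_le hx.2 (h x hx.1).2⟩

lemma choq_congr {μ : Set (Fin n → ℝ) → ℝ≥0∞} {g g' : (Fin n → ℝ) → ℝ}
    {E : Set (Fin n → ℝ)} (h : ∀ x ∈ E, g x = g' x) : choq μ g E = choq μ g' E := by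
  refine lintegral_congr fun t => ?_
  congr 1
  ext x
  exact and_congr_right fun hx => by rw [h x hx]

lemma choq_le_mul {μ ν : Set (Fin n → ℝ) → ℝ≥0∞} {C : ℝ≥0∞} (hC : C ≠ ⊤)
    (h : ∀ X, μ X ≤ C * ν X) (g : (Fin n → ℝ) → ℝ) (E : Set (Fin n → ℝ)) :
    choq μ g E ≤ C * choq ν g E := by
  calc choq μ g E ≤ ∫⁻ t in Ioi (0:ℝ), C * ν {x | x ∈ E ∧ t < g x} :=
        lintegral_mono fun t => h _
  _ = C * choq ν g E := lintegral_const_mul' C _ hC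

lemma hContent_mono (δ : ℝ) : Monotone (hContent n δ) := fun _ _ hAB =>
  le_iInf fun Qs => le_iInf fun hB => iInf₂_le Qs (hAB.trans hB)

lemma dContent_mono (δ : ℝ) : Monotone (dContent n δ) := fun _ _ hAB =>
  le_iInf fun Qs => le_iInf fun hB => iInf₂_le Qs ⟨hB.1, hAB.trans hB.2⟩

lemma lint_shift (c : ℝ) (F : ℝ → ℝ≥0∞) :
    ∫⁻ t in Ioi c, F t = ∫⁻ s in Ioi (0:ℝ), F (s + c) := by
  have hmp : MeasurePreserving (fun s : ℝ => s + c) volume volume :=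
    measurePreserving_add_right volume c
  have he : MeasurableEmbedding (fun s : ℝ => s + c) :=
    (Homeomorph.addRight c).measurableEmbedding
  have h := hmp.setLIntegral_comp_emb he F (Ioi 0)
  rw [show (fun s : ℝ => s + c) '' Ioi 0 = Ioi c by rw [image_add_const_Ioi, zero_add]] at h
  exact h.symm

lemma lint_reflect (L : ℝ) (F : ℝ → ℝ≥0∞) :
    ∫⁻ t in Ioo (0:ℝ) L, F (L - t) = ∫⁻ t in Ioo (0:ℝ) L, F t := by
  have hmp : MeasurePreserving (fun t : ℝ => L - t) volume volume := by
    simp_rw [sub_eq_add_neg]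
    exact (measurePreserving_add_left volume L).comp (Measure.measurePreserving_neg volume)
  have he : MeasurableEmbedding (fun t : ℝ => L - t) :=
    (Homeomorph.subLeft L).measurableEmbedding
  have h := hmp.setLIntegral_comp_emb he F (Ioo 0 L)
  rw [h, show (fun t : ℝ => L - t) '' Ioo 0 L = Ioo 0 L by
    rw [image_const_sub_Ioo]; simp]

lemma choq_const_add (μ : Set (Fin n → ℝ) → ℝ≥0∞) {c : ℝ} (hc : 0 ≤ c)
    {g : (Fin n → ℝ) → ℝ} {E : Set (Fin n → ℝ)} (hg : ∀ x ∈ E, 0 ≤ g x) :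
    choq μ (fun x => c + g x) E = ENNReal.ofReal c * μ E + choq μ g E := by
  rcases hc.eq_or_lt with rfl | hc0
  · simp [choq]
  · have hsplit : Ioi (0:ℝ) = Ioo 0 c ∪ Ici c := (Ioo_union_Ici_eq_Ioi hc0).symm
    have hdisj : Disjoint (Ioo (0:ℝ) c) (Ici c) := by
      rw [Set.disjoint_left]; rintro t ⟨_, h2⟩ h3; exact absurd h3 (not_le.2 h2)
    have h1 : ∫⁻ t in Ioo (0:ℝ) c, μ {x | x ∈ E ∧ t < c + g x} = ENNReal.ofReal c * μ E := by
      have hpt : ∀ t ∈ Ioo (0:ℝ) c, μ {x | x ∈ E ∧ t < c + g x} = μ E := by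
        intro t ht; congr 1; ext x; simp only [mem_setOf_eq]
        exact ⟨fun h => h.1, fun hx =>
          ⟨hx, lt_of_lt_of_le ht.2 (le_add_of_nonneg_right (hg x hx))⟩⟩
      rw [setLIntegral_congr_fun measurableSet_Ioo hpt, setLIntegral_const,
        Real.volume_Ioo, sub_zero, mul_comm]
    have h2 : ∫⁻ t in Ici c, μ {x | x ∈ E ∧ t < c + g x} = choq μ g E := by
      rw [setLIntegral_congr (Ioi_ae_eq_Ici (a := c)).symm, lint_shift]
      refine lintegral_congr fun s => ?_
      congr 1; ext x; simp only [mem_setOf_eq]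
      constructor
      · rintro ⟨hx, h⟩; exact ⟨hx, by linarith⟩
      · rintro ⟨hx, h⟩; exact ⟨hx, by linarith⟩
    show ∫⁻ t in Ioi (0:ℝ), μ {x | x ∈ E ∧ t < c + g x} = _
    rw [hsplit, lintegral_union measurableSet_Ici hdisj, h1, h2]

lemma choq_key {μ : Set (Fin n → ℝ) → ℝ≥0∞} (hμ : Monotone μ)
    (hsub : ∀ A B, μ (A ∪ B) ≤ μ A + μ B) {c : ℝ} (hc : 0 < c)
    {g : (Fin n → ℝ) → ℝ} {E : Set (Fin n → ℝ)} (hg : ∀ x ∈ E, 0 ≤ g x) :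
    ENNReal.ofReal c * μ E ≤ choq μ g E + choq μ (fun x => c - g x) E := by
  have aux : ∀ b : ℝ, 0 < b → b < c →
      ENNReal.ofReal b * μ E ≤ choq μ g E + choq μ (fun x => c - g x) E := by
    intro b hb0 hbc
    have hφmeas : Measurable fun t : ℝ => μ {x | x ∈ E ∧ t < g x} := by
      apply Antitone.measurable
      intro t t' htt'
      exact hμ fun x hx => ⟨hx.1, lt_of_le_of_lt htt' hx.2⟩
    have step2 : ∀ t ∈ Ioo (0:ℝ) b,
        μ E ≤ μ {x | x ∈ E ∧ t < g x} + μ {x | x ∈ E ∧ b - t < c - g x} := by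
      intro t ht
      have hcov : E ⊆ {x | x ∈ E ∧ t < g x} ∪ {x | x ∈ E ∧ b - t < c - g x} := by
        intro x hx
        rcases lt_or_ge t (g x) with h | h
        · exact Or.inl ⟨hx, h⟩
        · exact Or.inr ⟨hx, by linarith⟩
      exact le_trans (hμ hcov) (hsub _ _)
    calc ENNReal.ofReal b * μ E = ∫⁻ _ in Ioo (0:ℝ) b, μ E := by
          rw [setLIntegral_const, Real.volume_Ioo, sub_zero, mul_comm]
    _ ≤ ∫⁻ t in Ioo (0:ℝ) b,
          (μ {x | x ∈ E ∧ t < g x} + μ {x | x ∈ E ∧ b - t < c - g x}) :=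
        lintegral_mono_ae ((ae_restrict_iff' measurableSet_Ioo).2 (ae_of_all _ step2))
    _ = (∫⁻ t in Ioo (0:ℝ) b, μ {x | x ∈ E ∧ t < g x}) +
          ∫⁻ t in Ioo (0:ℝ) b, μ {x | x ∈ E ∧ b - t < c - g x} := lintegral_add_left hφmeas _
    _ ≤ choq μ g E + choq μ (fun x => c - g x) E := by
        refine add_le_add ?_ ?_
        · exact lintegral_mono_set Ioo_subset_Ioi_self
        · calc ∫⁻ t in Ioo (0:ℝ) b, μ {x | x ∈ E ∧ b - t < c - g x}
              = ∫⁻ t in Ioo (0:ℝ) b, μ {x | x ∈ E ∧ t < c - g x} :=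
                lint_reflect b (fun u => μ {x | x ∈ E ∧ u < c - g x})
          _ ≤ choq μ (fun x => c - g x) E := lintegral_mono_set Ioo_subset_Ioi_self
  refine ENNReal.le_of_forall_lt_one_mul_le fun a ha => ?_
  rcases eq_or_ne a 0 with rfl | ha0
  · simp
  have haT : a ≠ ⊤ := ha.ne_top
  have ha1 : a.toReal < 1 := by
    have := (ENNReal.toReal_lt_toReal haT ENNReal.one_ne_top).2 ha
    simpa using this
  have ha0' : 0 < a.toReal := ENNReal.toReal_pos ha0 haT
  have h := aux (a.toReal * c) (mul_pos ha0' hc) (by nlinarith)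
  calc a * (ENNReal.ofReal c * μ E) = ENNReal.ofReal (a.toReal * c) * μ E := by
        rw [ENNReal.ofReal_mul ha0'.le, ENNReal.ofReal_toReal haT, mul_assoc]
  _ ≤ _ := h

lemma choq_avg {μ : Set (Fin n → ℝ) → ℝ≥0∞} (hμ : Monotone μ)
    (hsub : ∀ A B, μ (A ∪ B) ≤ μ A + μ B)
    {g : (Fin n → ℝ) → ℝ} {E : Set (Fin n → ℝ)} (hg : ∀ x ∈ E, 0 ≤ g x) (c : ℝ)
    (hE : μ E ≠ ⊤) (hA : choq μ g E ≠ ⊤)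
    (hJ : choq μ (fun x => |g x - c|) E ≠ ⊤) :
    |(choq μ g E).toReal - c * (μ E).toReal| ≤ (choq μ (fun x => |g x - c|) E).toReal := by
  rw [abs_sub_le_iff]
  constructor
  · rcases le_or_gt 0 c with hc | hc
    · have h1 : choq μ g E ≤ ENNReal.ofReal c * μ E + choq μ (fun x => |g x - c|) E := by
        have heq := choq_const_add μ hc (g := fun x => |g x - c|) (E := E)
          (fun x _ => abs_nonneg _)
        calc choq μ g E ≤ choq μ (fun x => c + |g x - c|) E :=
              choq_le_choq hμ fun x hx => ⟨hx, by linarith [le_abs_self (g x - c)]⟩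
        _ = _ := heq
      have hfin : ENNReal.ofReal c * μ E + choq μ (fun x => |g x - c|) E ≠ ⊤ :=
        ENNReal.add_ne_top.2 ⟨ENNReal.mul_ne_top ENNReal.ofReal_ne_top hE, hJ⟩
      have h2 := ENNReal.toReal_mono hfin h1
      rw [ENNReal.toReal_add (ENNReal.mul_ne_top ENNReal.ofReal_ne_top hE) hJ,
        ENNReal.toReal_mul, ENNReal.toReal_ofReal hc] at h2
      linarith
    · have heq : choq μ (fun x => |g x - c|) E = ENNReal.ofReal (-c) * μ E + choq μ g E := by
        have hcongr : choq μ (fun x => |g x - c|) E = choq μ (fun x => -c + g x) E :=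
          choq_congr fun x hx => by
            have := hg x hx; rw [abs_of_nonneg (by linarith)]; ring
        rw [hcongr]; exact choq_const_add μ (by linarith) hg
      have hfin : ENNReal.ofReal (-c) * μ E ≠ ⊤ :=
        ENNReal.mul_ne_top ENNReal.ofReal_ne_top hE
      have h2 := congrArg ENNReal.toReal heq
      rw [ENNReal.toReal_add hfin hA, ENNReal.toReal_mul,
        ENNReal.toReal_ofReal (by linarith)] at h2
      linarith
  · rcases le_or_gt c 0 with hc | hc
    · have h1 : c * (μ E).toReal ≤ 0 :=
        mul_nonpos_iff.2 (Or.inr ⟨hc, ENNReal.toReal_nonneg⟩)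
      linarith [ENNReal.toReal_nonneg (a := choq μ g E),
        ENNReal.toReal_nonneg (a := choq μ (fun x => |g x - c|) E)]
    · have h1 : ENNReal.ofReal c * μ E ≤ choq μ g E + choq μ (fun x => |g x - c|) E := by
        calc ENNReal.ofReal c * μ E ≤ choq μ g E + choq μ (fun x => c - g x) E :=
              choq_key hμ hsub hc hg
        _ ≤ _ := add_le_add_right
              (choq_le_choq hμ fun x hx => ⟨hx, by linarith [neg_abs_le (g x - c)]⟩) _
      have h2 := ENNReal.toReal_mono (ENNReal.add_ne_top.2 ⟨hA, hJ⟩) h1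
      rw [ENNReal.toReal_mul, ENNReal.toReal_ofReal hc.le, ENNReal.toReal_add hA hJ] at h2
      linarith

end AuxStmt4

section AuxStmt4b
open Filter
variable {n : ℕ}

lemma dContent_subadd (δ : ℝ) (A B : Set (Fin n → ℝ)) :
    dContent n δ (A ∪ B) ≤ dContent n δ A + dContent n δ B := by
  refine ENNReal.le_of_forall_pos_le_add fun ε hε hfin => ?_
  have hA : dContent n δ A ≠ ⊤ := (lt_of_le_of_lt le_self_add hfin).ne
  have hB : dContent n δ B ≠ ⊤ := (lt_of_le_of_lt le_add_self hfin).ne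
  have hε' : ((ε : ℝ≥0∞) / 2) ≠ 0 := by
    simp only [ne_eq, ENNReal.div_eq_zero_iff, ENNReal.coe_eq_zero, ENNReal.ofNat_ne_top,
      or_false]
    exact_mod_cast hε.ne'
  obtain ⟨QA, hQA⟩ := iInf_lt_iff.1 (ENNReal.lt_add_right hA hε')
  obtain ⟨hQAprop, hQAsum⟩ := iInf_lt_iff.1 hQA
  obtain ⟨QB, hQB⟩ := iInf_lt_iff.1 (ENNReal.lt_add_right hB hε')
  obtain ⟨hQBprop, hQBsum⟩ := iInf_lt_iff.1 hQB
  set Qs : ℕ → Cube n := fun i => if Even i then QA (i / 2) else QB (i / 2) with hQs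
  have hdy : ∀ i, (Qs i).IsDyadic := by
    intro i
    by_cases h : Even i <;> simp only [hQs, h, if_true, if_false]
    · exact hQAprop.1 _
    · exact hQBprop.1 _
  have hcov : A ∪ B ⊆ ⋃ i, (Qs i).toSet := by
    rintro x (hx | hx)
    · obtain ⟨j, hj⟩ := mem_iUnion.1 (hQAprop.2 hx)
      refine mem_iUnion.2 ⟨2 * j, ?_⟩
      have h1 : Even (2 * j) := ⟨j, two_mul j⟩
      have h2 : 2 * j / 2 = j := by omega
      simp only [hQs, h1, if_true, h2]
      exact hj
    · obtain ⟨j, hj⟩ := mem_iUnion.1 (hQBprop.2 hx)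
      refine mem_iUnion.2 ⟨2 * j + 1, ?_⟩
      have h1 : ¬ Even (2 * j + 1) := by rintro ⟨r, hr⟩; omega
      have h2 : (2 * j + 1) / 2 = j := by omega
      simp only [hQs, h1, if_false, h2]
      exact hj
  have hsum : ∑' i, ENNReal.ofReal ((Qs i).side ^ δ) =
      (∑' i, ENNReal.ofReal ((QA i).side ^ δ)) + ∑' i, ENNReal.ofReal ((QB i).side ^ δ) := by
    rw [← tsum_even_add_odd (f := fun i => ENNReal.ofReal ((Qs i).side ^ δ))
      ENNReal.summable ENNReal.summable]
    congr 1
    · refine tsum_congr fun k => ?_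
      have h1 : Even (2 * k) := ⟨k, two_mul k⟩
      have h2 : 2 * k / 2 = k := by omega
      simp [hQs, h1, h2]
    · refine tsum_congr fun k => ?_
      have h1 : ¬ Even (2 * k + 1) := by rintro ⟨r, hr⟩; omega
      have h2 : (2 * k + 1) / 2 = k := by omega
      simp [hQs, h1, h2]
  calc dContent n δ (A ∪ B) ≤ ∑' i, ENNReal.ofReal ((Qs i).side ^ δ) :=
        iInf₂_le Qs ⟨hdy, hcov⟩
  _ = _ := hsum
  _ ≤ (dContent n δ A + ε / 2) + (dContent n δ B + ε / 2) := add_le_add hQAsum.le hQBsum.le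
  _ = dContent n δ A + dContent n δ B + ε := by
      rw [add_add_add_comm, ENNReal.add_halves]

lemma hContent_cube_le {δ : ℝ} (hδ0 : 0 < δ) (Q : Cube n) :
    hContent n δ Q.toSet ≤ ENNReal.ofReal (Q.side ^ δ) := by
  refine ENNReal.le_of_forall_pos_le_add fun ε hε _ => ?_
  set w : ℝ≥0∞ := ENNReal.ofReal ((2⁻¹ : ℝ) ^ δ) with hw
  have hw1 : w < 1 := by
    rw [hw, ← ENNReal.ofReal_one]
    exact ENNReal.ofReal_lt_ofReal_iff_of_nonneg (by positivity) |>.2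
      (Real.rpow_lt_one (by norm_num) (by norm_num) hδ0)
  have hwinv : (1 - w)⁻¹ ≠ ⊤ := by
    rw [ENNReal.inv_ne_top]
    exact (tsub_pos_of_lt hw1).ne'
  have hCw : ENNReal.ofReal (Q.side ^ δ) * (1 - w)⁻¹ ≠ ⊤ :=
    ENNReal.mul_ne_top ENNReal.ofReal_ne_top hwinv
  have htend : Tendsto (fun m : ℕ => ENNReal.ofReal (Q.side ^ δ) * (1 - w)⁻¹ * w ^ m)
      atTop (nhds 0) := by
    have h0 := ENNReal.tendsto_pow_atTop_nhds_zero_of_lt_one hw1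
    have := ENNReal.Tendsto.const_mul h0 (Or.inr hCw)
    simpa using this
  obtain ⟨m, hm⟩ := (htend.eventually
    (gt_mem_nhds (show (0:ℝ≥0∞) < ε from ENNReal.coe_pos.2 hε))).exists
  set Qs : ℕ → Cube n := fun i => if i = 0 then Q else
    ⟨Q.corner, Q.side * (2⁻¹:ℝ) ^ (m + i), mul_pos Q.side_pos (by positivity)⟩ with hQs
  have hcov : Q.toSet ⊆ ⋃ i, (Qs i).toSet := fun x hx =>
    mem_iUnion.2 ⟨0, by simp only [hQs, if_pos rfl]; exact hx⟩
  have hle : hContent n δ Q.toSet ≤ ∑' i, ENNReal.ofReal ((Qs i).side ^ δ) :=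
    iInf₂_le Qs hcov
  refine le_trans hle ?_
  rw [tsum_eq_zero_add' ENNReal.summable]
  have h0 : ENNReal.ofReal ((Qs 0).side ^ δ) = ENNReal.ofReal (Q.side ^ δ) := by
    simp [hQs]
  have hterm : ∀ k : ℕ, ENNReal.ofReal ((Qs (k+1)).side ^ δ)
      = ENNReal.ofReal (Q.side ^ δ) * (w ^ m * w ^ (k+1)) := by
    intro k
    have hk : (Qs (k+1)).side = Q.side * (2⁻¹:ℝ) ^ (m + (k+1)) := by
      simp [hQs]
    rw [hk, Real.mul_rpow Q.side_pos.le (by positivity),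
      ENNReal.ofReal_mul (Real.rpow_nonneg Q.side_pos.le δ)]
    congr 1
    have hreal : ((2⁻¹:ℝ) ^ (m + (k+1))) ^ δ = ((2⁻¹:ℝ) ^ δ) ^ (m + (k+1)) := by
      rw [← Real.rpow_natCast (2⁻¹:ℝ) (m + (k+1)),
        ← Real.rpow_mul (by norm_num : (0:ℝ) ≤ 2⁻¹), mul_comm,
        Real.rpow_mul (by norm_num : (0:ℝ) ≤ 2⁻¹), Real.rpow_natCast]
    rw [hreal, ENNReal.ofReal_pow (by positivity), hw, pow_add]
  have htail : ∑' k, ENNReal.ofReal ((Qs (k+1)).side ^ δ)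
      ≤ ENNReal.ofReal (Q.side ^ δ) * (1 - w)⁻¹ * w ^ m := by
    calc ∑' k, ENNReal.ofReal ((Qs (k+1)).side ^ δ)
        = ENNReal.ofReal (Q.side ^ δ) * w ^ m * ∑' k, w ^ (k+1) := by
          rw [← ENNReal.tsum_mul_left]
          refine tsum_congr fun k => ?_
          rw [hterm k]; ring
    _ = ENNReal.ofReal (Q.side ^ δ) * w ^ m * (w * (1 - w)⁻¹) := by
          rw [ENNReal.tsum_geometric_add_one]
    _ ≤ ENNReal.ofReal (Q.side ^ δ) * w ^ m * (1 * (1 - w)⁻¹) := by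
          gcongr
    _ = ENNReal.ofReal (Q.side ^ δ) * (1 - w)⁻¹ * w ^ m := by ring
  calc ENNReal.ofReal ((Qs 0).side ^ δ) + ∑' k, ENNReal.ofReal ((Qs (k+1)).side ^ δ)
      ≤ ENNReal.ofReal (Q.side ^ δ) + ENNReal.ofReal (Q.side ^ δ) * (1 - w)⁻¹ * w ^ m := by
        rw [h0]; exact add_le_add_right htail _
  _ ≤ ENNReal.ofReal (Q.side ^ δ) + ε := add_le_add_right hm.le _

end AuxStmt4b

/-- equivalence of the BMO seminorm and the mean-based BMO seminorm. -/
theorem stmt4 (n : ℕ) (hn : 1 ≤ n) (δ : ℝ) (hδ0 : 0 < δ) (hδn : δ ≤ n)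
    (K : ℝ) (hK : 1 ≤ K)
    (hKcomp : ∀ E : Set (Fin n → ℝ),
      hContent n δ E ≤ dContent n δ E ∧ dContent n δ E ≤ ENNReal.ofReal K * hContent n δ E) :
    ∀ f : (Fin n → ℝ) → ℝ, MemBMO n δ f →
      bmoNorm n δ f ≤ bmoTildeNorm n δ f ∧
        bmoTildeNorm n δ f ≤ ENNReal.ofReal (1 + 2 * K) * bmoNorm n δ f := by
  intro f hf
  have hμh : Monotone (hContent n δ) := hContent_mono δ
  have hμd : Monotone (dContent n δ) := dContent_mono δ
  have hsubd := dContent_subadd (n := n) δ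
  have hKne : ENNReal.ofReal K ≠ ⊤ := ENNReal.ofReal_ne_top
  have hK0 : (0:ℝ) ≤ K := by linarith
  constructor
  · show (⨆ Q : Cube n, ⨅ c : ℝ,
        integH n δ (fun x => |f x - c|) Q.toSet / hContent n δ Q.toSet) ≤
      ⨆ Q : Cube n,
        integH n δ (fun x => |f x - avgQ n δ f Q|) Q.toSet / hContent n δ Q.toSet
    exact iSup_mono fun Q => iInf_le _ (avgQ n δ f Q)
  · show (⨆ Q : Cube n,
        integH n δ (fun x => |f x - avgQ n δ f Q|) Q.toSet / hContent n δ Q.toSet) ≤ _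
    refine iSup_le fun Q => ?_
    set a := avgQ n δ f Q with ha
    by_cases hQ0 : hContent n δ Q.toSet = 0
    · have hnum : integH n δ (fun x => |f x - a|) Q.toSet = 0 := by
        have hz : ∀ t : ℝ, hContent n δ {x | x ∈ Q.toSet ∧ t < |f x - a|} = 0 := fun t =>
          le_antisymm (le_trans (hμh fun x hx => hx.1) hQ0.le) zero_le
        show (∫⁻ t in Ioi (0:ℝ), hContent n δ {x | x ∈ Q.toSet ∧ t < |f x - a|}) = 0
        simp [hz]
      rw [hnum, ENNReal.zero_div]
      exact zero_le
    · set h := hContent n δ Q.toSet with hh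
      have hQfin : h ≠ ⊤ :=
        ne_top_of_le_ne_top ENNReal.ofReal_ne_top (hContent_cube_le hδ0 Q)
      set C : Set (Fin n → ℝ) := Set.pi univ fun i => Icc (Q.corner i) (Q.corner i + Q.side)
        with hCdef
      have hCcomp : IsCompact C := isCompact_univ_pi fun i => isCompact_Icc
      have hQC : Q.toSet ⊆ C := by
        intro x hx
        rw [hCdef, mem_univ_pi]
        exact fun i => ⟨(hx i).1, (hx i).2.le⟩
      have hfC : integH n δ (fun x => |f x|) C ≠ ⊤ := (hf.1.2 C hCcomp).ne
      have hBfin : bmoNorm n δ f ≠ ⊤ := hf.2.ne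
      refine ENNReal.le_of_forall_pos_le_add fun ε hε hlt => ?_
      have h2K0 : ENNReal.ofReal (1 + 2 * K) ≠ 0 := by
        rw [ne_eq, ENNReal.ofReal_eq_zero, not_le]; linarith
      set ε' : ℝ≥0∞ := (ε : ℝ≥0∞) / ENNReal.ofReal (1 + 2 * K) with hε'def
      have hε'0 : ε' ≠ 0 := by
        rw [hε'def, ne_eq, ENNReal.div_eq_zero_iff]
        push_neg
        exact ⟨by exact_mod_cast hε.ne', ENNReal.ofReal_ne_top⟩
      have hinf : (⨅ c : ℝ, integH n δ (fun x => |f x - c|) Q.toSet / h)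
          < bmoNorm n δ f + ε' := by
        refine lt_of_le_of_lt ?_ (ENNReal.lt_add_right hBfin hε'0)
        exact le_iSup (fun Q : Cube n => ⨅ c : ℝ,
          integH n δ (fun x => |f x - c|) Q.toSet / hContent n δ Q.toSet) Q
      obtain ⟨c, hc⟩ := iInf_lt_iff.1 hinf
      set I := integH n δ (fun x => |f x - c|) Q.toSet with hIdef
      have hIh : I / h ≤ bmoNorm n δ f + ε' := hc.le
      have hIfin : I ≠ ⊤ := by
        have hle : I ≤ ENNReal.ofReal |c| * h + integH n δ (fun x => |f x|) C := by
          have heq := choq_const_add (hContent n δ) (abs_nonneg c)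
            (g := fun x => |f x|) (E := Q.toSet) (fun x _ => abs_nonneg _)
          calc I ≤ choq (hContent n δ) (fun x => |c| + |f x|) Q.toSet :=
                choq_le_choq hμh fun x hx => ⟨hx, by
                  calc |f x - c| ≤ |f x| + |c| := by
                        simpa [sub_eq_add_neg, abs_neg] using abs_add_le (f x) (-c)
                  _ = |c| + |f x| := add_comm _ _⟩
          _ = ENNReal.ofReal |c| * h + choq (hContent n δ) (fun x => |f x|) Q.toSet := heq
          _ ≤ ENNReal.ofReal |c| * h + integH n δ (fun x => |f x|) C :=
                add_le_add_right (choq_le_choq hμh fun x hx => ⟨hQC hx, le_rfl⟩) _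
        exact ne_top_of_le_ne_top
          (ENNReal.add_ne_top.2 ⟨ENNReal.mul_ne_top ENNReal.ofReal_ne_top hQfin, hfC⟩) hle
      set Sp := Q.toSet ∩ {x | 0 ≤ f x} with hSpdef
      set Sm := Q.toSet ∩ {x | f x < 0} with hSmdef
      set Hp := dContent n δ Sp with hHpdef
      set Hm := dContent n δ Sm with hHmdef
      set Ap := integD n δ f Sp with hApdef
      set Am := integD n δ (fun x => -f x) Sm with hAmdef
      set Jp := integD n δ (fun x => |f x - c|) Sp with hJpdef
      set Jm := integD n δ (fun x => |f x - c|) Sm with hJmdef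
      set J := integD n δ (fun x => |f x - c|) Q.toSet with hJdef
      have hSpQ : Sp ⊆ Q.toSet := inter_subset_left
      have hSmQ : Sm ⊆ Q.toSet := inter_subset_left
      have hQsplit : Q.toSet ⊆ Sp ∪ Sm := by
        intro x hx
        rcases le_or_gt 0 (f x) with hfx | hfx
        · exact Or.inl ⟨hx, hfx⟩
        · exact Or.inr ⟨hx, hfx⟩
      have hdQfin : dContent n δ Q.toSet ≤ ENNReal.ofReal K * h := (hKcomp Q.toSet).2
      have hHpfin : Hp ≠ ⊤ :=
        ne_top_of_le_ne_top (ENNReal.mul_ne_top hKne hQfin) (le_trans (hμd hSpQ) hdQfin)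
      have hHmfin : Hm ≠ ⊤ :=
        ne_top_of_le_ne_top (ENNReal.mul_ne_top hKne hQfin) (le_trans (hμd hSmQ) hdQfin)
      have hJle : J ≤ ENNReal.ofReal K * I :=
        choq_le_mul hKne (fun X => (hKcomp X).2) _ _
      have hJfin : J ≠ ⊤ := ne_top_of_le_ne_top (ENNReal.mul_ne_top hKne hIfin) hJle
      have hJpJ : Jp ≤ J := choq_le_choq hμd fun x hx => ⟨hSpQ hx, le_rfl⟩
      have hJmJ : Jm ≤ J := choq_le_choq hμd fun x hx => ⟨hSmQ hx, le_rfl⟩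
      have hApfin : Ap ≠ ⊤ := by
        have hle : Ap ≤ ENNReal.ofReal K * integH n δ (fun x => |f x|) C := by
          calc Ap ≤ ENNReal.ofReal K * choq (hContent n δ) f Sp :=
                choq_le_mul hKne (fun X => (hKcomp X).2) _ _
          _ ≤ ENNReal.ofReal K * integH n δ (fun x => |f x|) C :=
                mul_le_mul_right
                  (choq_le_choq hμh fun x hx => ⟨hQC (hSpQ hx), le_abs_self _⟩) _
        exact ne_top_of_le_ne_top (ENNReal.mul_ne_top hKne hfC) hle
      have hAmfin : Am ≠ ⊤ := by
        have hle : Am ≤ ENNReal.ofReal K * integH n δ (fun x => |f x|) C := by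
          calc Am ≤ ENNReal.ofReal K * choq (hContent n δ) (fun x => -f x) Sm :=
                choq_le_mul hKne (fun X => (hKcomp X).2) _ _
          _ ≤ ENNReal.ofReal K * integH n δ (fun x => |f x|) C :=
                mul_le_mul_right
                  (choq_le_choq hμh fun x hx => ⟨hQC (hSmQ hx), neg_le_abs _⟩) _
        exact ne_top_of_le_ne_top (ENNReal.mul_ne_top hKne hfC) hle
      have hkey_p : |Ap.toReal - c * Hp.toReal| ≤ Jp.toReal :=
        choq_avg hμd hsubd (fun x hx => hx.2) c hHpfin hApfin
          (ne_top_of_le_ne_top hJfin hJpJ)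
      have hkey_m : |Am.toReal - (-c) * Hm.toReal| ≤ Jm.toReal := by
        have hcongr : choq (dContent n δ) (fun x => |(-f x) - (-c)|) Sm = Jm :=
          choq_congr fun x _ => by
            rw [show -f x - -c = -(f x - c) by ring, abs_neg]
        have hres := choq_avg hμd hsubd (g := fun x => -f x) (E := Sm)
          (fun x hx => neg_nonneg.2 hx.2.le) (-c) hHmfin hAmfin
          (by rw [hcongr]; exact ne_top_of_le_ne_top hJfin hJmJ)
        rwa [hcongr] at hres
      have hhD : h.toReal ≤ Hp.toReal + Hm.toReal := by
        have h1 : h ≤ Hp + Hm :=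
          le_trans (hKcomp Q.toSet).1 (le_trans (hμd hQsplit) (hsubd Sp Sm))
        have h2 := ENNReal.toReal_mono (ENNReal.add_ne_top.2 ⟨hHpfin, hHmfin⟩) h1
        rwa [ENNReal.toReal_add hHpfin hHmfin] at h2
      have hh0 : 0 < h.toReal := ENNReal.toReal_pos hQ0 hQfin
      have hD0 : 0 < Hp.toReal + Hm.toReal := lt_of_lt_of_le hh0 hhD
      have haval : a = (Ap.toReal - Am.toReal) / (Hp.toReal + Hm.toReal) := rfl
      have hJptoReal : Jp.toReal ≤ K * I.toReal := by
        have h1 := ENNReal.toReal_mono (ENNReal.mul_ne_top hKne hIfin) (le_trans hJpJ hJle)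
        rwa [ENNReal.toReal_mul, ENNReal.toReal_ofReal hK0] at h1
      have hJmtoReal : Jm.toReal ≤ K * I.toReal := by
        have h1 := ENNReal.toReal_mono (ENNReal.mul_ne_top hKne hIfin) (le_trans hJmJ hJle)
        rwa [ENNReal.toReal_mul, ENNReal.toReal_ofReal hK0] at h1
      have habs : |a - c| ≤ 2 * K * I.toReal / h.toReal := by
        have hN : |(Ap.toReal - Am.toReal) - c * (Hp.toReal + Hm.toReal)|
            ≤ Jp.toReal + Jm.toReal := by
          calc |(Ap.toReal - Am.toReal) - c * (Hp.toReal + Hm.toReal)|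
              = |(Ap.toReal - c * Hp.toReal) - (Am.toReal - (-c) * Hm.toReal)| := by
                ring_nf
          _ ≤ |Ap.toReal - c * Hp.toReal| + |Am.toReal - (-c) * Hm.toReal| := abs_sub _ _
          _ ≤ Jp.toReal + Jm.toReal := add_le_add hkey_p hkey_m
        have ha_c : |a - c| = |(Ap.toReal - Am.toReal) - c * (Hp.toReal + Hm.toReal)|
            / (Hp.toReal + Hm.toReal) := by
          rw [haval, div_sub' hD0.ne', abs_div, abs_of_pos hD0]
          ring_nf
        rw [ha_c]
        have hnum0 : 0 ≤ 2 * K * I.toReal := by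
          have := ENNReal.toReal_nonneg (a := I); nlinarith
        exact div_le_div₀ hnum0 (hN.trans (by linarith)) hh0 hhD
      have hmain : integH n δ (fun x => |f x - a|) Q.toSet
          ≤ ENNReal.ofReal |a - c| * h + I := by
        have heq := choq_const_add (hContent n δ) (abs_nonneg (a - c))
          (g := fun x => |f x - c|) (E := Q.toSet) (fun x _ => abs_nonneg _)
        calc integH n δ (fun x => |f x - a|) Q.toSet
            ≤ choq (hContent n δ) (fun x => |a - c| + |f x - c|) Q.toSet := by
              refine choq_le_choq hμh fun x hx => ⟨hx, ?_⟩
              calc |f x - a| = |(f x - c) - (a - c)| := by ring_nf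
              _ ≤ |f x - c| + |a - c| := abs_sub _ _
              _ = |a - c| + |f x - c| := add_comm _ _
        _ = ENNReal.ofReal |a - c| * h + I := heq
      have hIhfin : I / h ≠ ⊤ := (ENNReal.div_lt_top hIfin hQ0).ne
      calc integH n δ (fun x => |f x - a|) Q.toSet / h
          ≤ (ENNReal.ofReal |a - c| * h + I) / h := ENNReal.div_le_div_right hmain h
      _ = ENNReal.ofReal |a - c| * h / h + I / h := ENNReal.add_div
      _ = ENNReal.ofReal |a - c| + I / h := by
          rw [mul_div_assoc, ENNReal.div_self hQ0 hQfin, mul_one]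
      _ ≤ ENNReal.ofReal (2 * K) * (I / h) + I / h := by
          refine add_le_add_left ?_ _
          calc ENNReal.ofReal |a - c| ≤ ENNReal.ofReal (2 * K * I.toReal / h.toReal) :=
                ENNReal.ofReal_le_ofReal habs
          _ = ENNReal.ofReal (2 * K) * ENNReal.ofReal (I.toReal / h.toReal) := by
                rw [← ENNReal.ofReal_mul (by linarith : (0:ℝ) ≤ 2 * K)]
                congr 1
                ring
          _ = ENNReal.ofReal (2 * K) * (I / h) := by
                rw [← ENNReal.toReal_div, ENNReal.ofReal_toReal hIhfin]
      _ = (ENNReal.ofReal (2 * K) + 1) * (I / h) := by ring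
      _ = ENNReal.ofReal (1 + 2 * K) * (I / h) := by
          rw [ENNReal.ofReal_add (by norm_num) (by linarith : (0:ℝ) ≤ 2 * K),
            ENNReal.ofReal_one]
          ring
      _ ≤ ENNReal.ofReal (1 + 2 * K) * (bmoNorm n δ f + ε') := mul_le_mul_right hIh _
      _ = ENNReal.ofReal (1 + 2 * K) * bmoNorm n δ f + ENNReal.ofReal (1 + 2 * K) * ε' :=
          mul_add _ _ _
      _ ≤ ENNReal.ofReal (1 + 2 * K) * bmoNorm n δ f + ε := by
          refine add_le_add_right ?_ _
          rw [hε'def]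
          exact ENNReal.mul_div_le
end
end

section
/- Let n ≥ 1 be an integer, δ ∈ (0, n], and f ∈ L¹_loc(ℝⁿ, ℋ^δ_∞) with |f(x)| < ∞ for every x ∈ ℝⁿ. Then for every cube Q of ℝⁿ: (1) e^{f_{Q,δ}} ≤ (1/\~ℋ^δ_∞(Q)) · ( ∫_{Q∩E_{f,+}} e^{f} d\~ℋ^δ_∞ + ∫_{Q∩E_{f,−}} e^{f} d\~ℋ^δ_∞ ), and (2) e^{−f_{Q,δ}} ≤ (1/\~ℋ^δ_∞(Q)) · ( ∫_{Q∩E_{f,+}} e^{−f} d\~ℋ^δ_∞ + ∫_{Q∩E_{f,−}} e^{−f} d\~ℋ^δ_∞ ). -/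
open scoped ENNReal
open Set MeasureTheory

noncomputable section

namespace Stmt12Aux

variable {n : ℕ} {δ : ℝ}

/-- the `δ`-cost of a cube -/
def cost (δ : ℝ) {n : ℕ} (Q : Cube n) : ℝ≥0∞ := ENNReal.ofReal (Q.side ^ δ)

lemma dContent_mono {E F : Set (Fin n → ℝ)} (h : E ⊆ F) : dContent n δ E ≤ dContent n δ F := by
  refine le_iInf fun Qs => le_iInf fun hQ => ?_
  exact iInf_le_of_le Qs (iInf_le_of_le ⟨hQ.1, h.trans hQ.2⟩ le_rfl)

lemma hContent_mono {E F : Set (Fin n → ℝ)} (h : E ⊆ F) : hContent n δ E ≤ hContent n δ F := by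
  refine le_iInf fun Qs => le_iInf fun hQ => ?_
  exact iInf_le_of_le Qs (iInf_le_of_le (h.trans hQ) le_rfl)

lemma dContent_le_of_cover {E : Set (Fin n → ℝ)} (Qs : ℕ → Cube n)
    (hdy : ∀ i, (Qs i).IsDyadic) (hcov : E ⊆ ⋃ i, (Qs i).toSet) :
    dContent n δ E ≤ ∑' i, cost δ (Qs i) :=
  iInf_le_of_le Qs (iInf_le_of_le ⟨hdy, hcov⟩ le_rfl)

/-- tiny dyadic cubes with small total cost -/
def tiny (n : ℕ) (m j : ℕ) : Cube n := ⟨fun _ => 0, (2:ℝ) ^ (-(m+j:ℕ) : ℤ), by positivity⟩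

lemma tiny_dyadic (m j : ℕ) : (tiny n m j).IsDyadic :=
  ⟨(-(m+j:ℕ) : ℤ), fun _ => 0, rfl, fun i => by simp [tiny]⟩

lemma tiny_cost (hδ0 : 0 < δ) (m j : ℕ) :
    cost δ (tiny n m j) = ENNReal.ofReal (((2:ℝ) ^ (-δ)) ^ (m + j)) := by
  have h2 : (0:ℝ) < 2 := by norm_num
  have : ((2:ℝ) ^ (-(m+j:ℕ) : ℤ)) ^ δ = ((2:ℝ) ^ (-δ)) ^ (m + j) := by
    rw [← Real.rpow_intCast 2 (-(m+j:ℕ) : ℤ), ← Real.rpow_natCast ((2:ℝ) ^ (-δ)) (m+j),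
      ← Real.rpow_mul (by norm_num) (-δ), ← Real.rpow_mul (by norm_num)]
    push_cast
    ring_nf
  rw [cost]
  show ENNReal.ofReal (((2:ℝ) ^ (-(m+j:ℕ) : ℤ)) ^ δ) = _
  rw [this]

lemma tiny_sum (hδ0 : 0 < δ) {ε : ℝ≥0∞} (hε : 0 < ε) :
    ∃ m : ℕ, ∑' j, cost δ (tiny n m j) ≤ ε := by
  have h2 : (0:ℝ) < 2 := by norm_num
  set r : ℝ := (2:ℝ) ^ (-δ) with hr
  have hr0 : 0 < r := Real.rpow_pos_of_pos h2 _
  have hr1 : r < 1 := Real.rpow_lt_one_of_one_lt_of_neg (by norm_num) (by linarith)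
  set ρ : ℝ≥0∞ := ENNReal.ofReal r with hρ
  have hρ1 : ρ < 1 := by
    rw [hρ]
    exact (ENNReal.ofReal_lt_one).2 hr1
  have hgeo : ∑' j : ℕ, ρ ^ j = (1 - ρ)⁻¹ := ENNReal.tsum_geometric ρ
  have hC : (1 - ρ)⁻¹ ≠ ∞ := by
    simp only [ne_eq, ENNReal.inv_eq_top, tsub_eq_zero_iff_le]
    exact fun h => absurd h (not_le.2 hρ1)
  have hC0 : (1 - ρ)⁻¹ ≠ 0 := by
    simp [ENNReal.inv_ne_zero]
  -- choose m with ofReal (r^m) ≤ min ε 1 / (1-ρ)⁻¹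
  set tgt : ℝ≥0∞ := (min ε 1) / (1 - ρ)⁻¹ with htgt
  have hmin0 : min ε 1 ≠ 0 := by
    have : (0:ℝ≥0∞) < min ε 1 := lt_min hε zero_lt_one
    exact ne_of_gt this
  have htgt0 : tgt ≠ 0 := by
    rw [htgt]
    exact (ENNReal.div_ne_zero).2 ⟨hmin0, hC⟩
  -- pick x > 0 real below tgt
  obtain ⟨x, hx0, hxt⟩ : ∃ x : ℝ, 0 < x ∧ ENNReal.ofReal x ≤ tgt := by
    rcases eq_or_ne tgt ∞ with h | h
    · exact ⟨1, one_pos, by simp [h]⟩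
    · refine ⟨tgt.toReal, ?_, by rw [ENNReal.ofReal_toReal h]⟩
      exact ENNReal.toReal_pos htgt0 h
  obtain ⟨m, hm⟩ := exists_pow_lt_of_lt_one hx0 hr1
  refine ⟨m, ?_⟩
  have hsum : ∑' j, cost δ (tiny n m j) = ENNReal.ofReal (r ^ m) * (1 - ρ)⁻¹ := by
    rw [← hgeo]
    rw [← ENNReal.tsum_mul_left]
    congr 1
    ext j
    rw [tiny_cost hδ0, pow_add, ENNReal.ofReal_mul (by positivity)]
    congr 1
    rw [hρ, ← ENNReal.ofReal_pow (le_of_lt hr0)]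
  rw [hsum]
  calc ENNReal.ofReal (r ^ m) * (1 - ρ)⁻¹ ≤ tgt * (1 - ρ)⁻¹ := by
        gcongr
        exact le_trans (ENNReal.ofReal_le_ofReal (le_of_lt hm)) hxt
    _ = min ε 1 := by
        rw [htgt, ENNReal.div_mul_cancel hC0 hC]
    _ ≤ ε := min_le_left _ _


def optSet {n : ℕ} (o : Option (Cube n)) : Set (Fin n → ℝ) :=
  match o with | some Q => Q.toSet | none => ∅

def optCost (δ : ℝ) {n : ℕ} (o : Option (Cube n)) : ℝ≥0∞ :=
  match o with | some Q => cost δ Q | none => 0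

lemma dContent_le_partial (hδ0 : 0 < δ) {E : Set (Fin n → ℝ)} (C : ℕ → Option (Cube n))
    (hdy : ∀ i Q, C i = some Q → Q.IsDyadic)
    (hcov : E ⊆ ⋃ i, optSet (C i)) :
    dContent n δ E ≤ ∑' i, optCost δ (C i) := by
  refine ENNReal.le_of_forall_pos_le_add fun ε hε _ => ?_
  obtain ⟨m, hm⟩ := tiny_sum (n := n) hδ0 (ε := (ε:ℝ≥0∞)) (by exact_mod_cast hε)
  set Ts : ℕ → Cube n := fun i => match C i with | some Q => Q | none => tiny n m i with hTs
  have hTdy : ∀ i, (Ts i).IsDyadic := by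
    intro i
    cases h : C i with
    | some Q => simpa [hTs, h] using hdy i Q h
    | none => simpa [hTs, h] using tiny_dyadic (n := n) m i
  have hTcov : E ⊆ ⋃ i, (Ts i).toSet := by
    refine hcov.trans (iUnion_mono fun i => ?_)
    cases h : C i with
    | some Q => simp [optSet, hTs, h]
    | none => simp [optSet, hTs, h]
  refine (dContent_le_of_cover Ts hTdy hTcov).trans ?_
  have hpt : ∀ i, cost δ (Ts i) ≤ optCost δ (C i) + cost δ (tiny n m i) := by
    intro i
    cases h : C i with
    | some Q => simp [optCost, hTs, h]
    | none => simp [optCost, hTs, h]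
  calc ∑' i, cost δ (Ts i) ≤ ∑' i, (optCost δ (C i) + cost δ (tiny n m i)) :=
        ENNReal.tsum_le_tsum hpt
    _ = ∑' i, optCost δ (C i) + ∑' i, cost δ (tiny n m i) := ENNReal.tsum_add
    _ ≤ ∑' i, optCost δ (C i) + ε := by gcongr

lemma hContent_le_of_cover {E : Set (Fin n → ℝ)} (Qs : ℕ → Cube n)
    (hcov : E ⊆ ⋃ i, (Qs i).toSet) :
    hContent n δ E ≤ ∑' i, cost δ (Qs i) :=
  iInf_le_of_le Qs (iInf_le_of_le hcov le_rfl)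

lemma hContent_le_cube (hδ0 : 0 < δ) {E : Set (Fin n → ℝ)} {Q : Cube n} (h : E ⊆ Q.toSet) :
    hContent n δ E ≤ cost δ Q := by
  refine ENNReal.le_of_forall_pos_le_add fun ε hε _ => ?_
  obtain ⟨m, hm⟩ := tiny_sum (n := n) hδ0 (ε := (ε:ℝ≥0∞)) (by exact_mod_cast hε)
  set Ts : ℕ → Cube n := fun i => if i = 0 then Q else tiny n m i with hTs
  have hTcov : E ⊆ ⋃ i, (Ts i).toSet := fun x hx => mem_iUnion.2 ⟨0, by simpa [hTs] using h hx⟩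
  refine (hContent_le_of_cover Ts hTcov).trans ?_
  have hpt : ∀ i, cost δ (Ts i) ≤ (if i = 0 then cost δ Q else 0) + cost δ (tiny n m i) := by
    intro i
    rw [hTs]
    by_cases h0 : i = 0 <;> simp [h0]
  calc ∑' i, cost δ (Ts i) ≤ ∑' i, ((if i = 0 then cost δ Q else 0) + cost δ (tiny n m i)) :=
        ENNReal.tsum_le_tsum hpt
    _ = ∑' i, (if i = 0 then cost δ Q else 0) + ∑' i, cost δ (tiny n m i) := ENNReal.tsum_add
    _ ≤ cost δ Q + ε := by
        refine add_le_add ?_ hm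
        rw [tsum_eq_sum (s := {0}) (by intro b hb; simp at hb; simp [hb])]
        simp

lemma dContent_union {E F : Set (Fin n → ℝ)} :
    dContent n δ (E ∪ F) ≤ dContent n δ E + dContent n δ F := by
  by_cases hE : dContent n δ E = ∞
  · rw [hE]; simp
  by_cases hF : dContent n δ F = ∞
  · rw [hF]; simp
  refine ENNReal.le_of_forall_pos_le_add fun ε hε _ => ?_
  have hε2 : (0:ℝ≥0∞) < ε / 2 := by
    simp only [ENNReal.div_pos_iff]
    exact ⟨by exact_mod_cast ne_of_gt hε, by norm_num⟩
  have hEc : dContent n δ E < dContent n δ E + ε / 2 :=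
    ENNReal.lt_add_right hE (ne_of_gt hε2)
  have hFc : dContent n δ F < dContent n δ F + ε / 2 :=
    ENNReal.lt_add_right hF (ne_of_gt hε2)
  rw [dContent, iInf_lt_iff] at hEc hFc
  obtain ⟨Qs, hQs⟩ := hEc
  obtain ⟨Rs, hRs⟩ := hFc
  rw [iInf_lt_iff] at hQs hRs
  obtain ⟨⟨hQdy, hQcov⟩, hQsum⟩ := hQs
  obtain ⟨⟨hRdy, hRcov⟩, hRsum⟩ := hRs
  set Ts : ℕ → Cube n := fun k => if k % 2 = 0 then Qs (k / 2) else Rs (k / 2) with hTs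
  have hTeven : ∀ k, Ts (2 * k) = Qs k := by
    intro k
    simp [hTs, Nat.mul_mod_right, Nat.mul_div_cancel_left k (by norm_num : 0 < 2)]
  have hTodd : ∀ k, Ts (2 * k + 1) = Rs k := by
    intro k
    have h1 : (2 * k + 1) % 2 = 1 := by omega
    have h2 : (2 * k + 1) / 2 = k := by omega
    simp [hTs, h1, h2]
  have hTdy : ∀ k, (Ts k).IsDyadic := by
    intro k
    rw [hTs]
    by_cases h : k % 2 = 0 <;> simp only [h, if_true, if_false, reduceIte] <;>
      [exact hQdy _; exact hRdy _]
  have hTcov : E ∪ F ⊆ ⋃ k, (Ts k).toSet := by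
    rintro x (hx | hx)
    · obtain ⟨i, hi⟩ := mem_iUnion.1 (hQcov hx)
      exact mem_iUnion.2 ⟨2 * i, by rw [hTeven]; exact hi⟩
    · obtain ⟨i, hi⟩ := mem_iUnion.1 (hRcov hx)
      exact mem_iUnion.2 ⟨2 * i + 1, by rw [hTodd]; exact hi⟩
  have hsum : ∑' k, cost δ (Ts k) = ∑' k, cost δ (Qs k) + ∑' k, cost δ (Rs k) := by
    rw [← tsum_even_add_odd (f := fun k => cost δ (Ts k)) ENNReal.summable ENNReal.summable]
    congr 1
    · exact tsum_congr fun k => by rw [hTeven]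
    · exact tsum_congr fun k => by rw [hTodd]
  calc dContent n δ (E ∪ F) ≤ ∑' k, cost δ (Ts k) := dContent_le_of_cover Ts hTdy hTcov
    _ = ∑' k, cost δ (Qs k) + ∑' k, cost δ (Rs k) := hsum
    _ ≤ (dContent n δ E + ε / 2) + (dContent n δ F + ε / 2) := by
        gcongr <;> [exact le_of_lt hQsum; exact le_of_lt hRsum]
    _ = dContent n δ E + dContent n δ F + ε := by
        rw [add_add_add_comm, ENNReal.add_halves]


lemma exists_scale (s : ℝ) (hs : 0 < s) : ∃ k : ℤ, s ≤ (2:ℝ)^k ∧ (2:ℝ)^k ≤ 2*s := by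
  refine ⟨⌈Real.logb 2 s⌉, ?_, ?_⟩
  · have h1 : s = (2:ℝ) ^ (Real.logb 2 s) := (Real.rpow_logb (by norm_num) (by norm_num) hs).symm
    rw [← Real.rpow_intCast 2 ⌈Real.logb 2 s⌉]
    calc s = (2:ℝ) ^ (Real.logb 2 s) := h1
      _ ≤ (2:ℝ) ^ ((⌈Real.logb 2 s⌉ : ℝ)) := by
          apply Real.rpow_le_rpow_of_exponent_le (by norm_num)
          exact Int.le_ceil _
  · rw [← Real.rpow_intCast 2 ⌈Real.logb 2 s⌉]
    have h1 : ((⌈Real.logb 2 s⌉ : ℝ)) ≤ Real.logb 2 s + 1 := by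
      have := Int.ceil_lt_add_one (Real.logb 2 s)
      linarith
    calc (2:ℝ) ^ ((⌈Real.logb 2 s⌉ : ℝ)) ≤ (2:ℝ) ^ (Real.logb 2 s + 1) :=
          Real.rpow_le_rpow_of_exponent_le (by norm_num) h1
      _ = (2:ℝ) ^ (Real.logb 2 s) * 2 := by
          rw [Real.rpow_add (by norm_num), Real.rpow_one]
      _ = 2 * s := by
          rw [Real.rpow_logb (by norm_num) (by norm_num) hs]; ring

/-- the dyadic cube at scale `2^k` with corner `z * 2^k`. -/
def dyadicAt {n : ℕ} (k : ℤ) (z : Fin n → ℤ) : Cube n :=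
  ⟨fun i => (z i : ℝ) * 2^k, (2:ℝ)^k, by positivity⟩

lemma dyadicAt_isDyadic {k : ℤ} {z : Fin n → ℤ} : (dyadicAt k z).IsDyadic :=
  ⟨k, z, rfl, fun _ => rfl⟩

lemma mem_dyadicAt {k : ℤ} {z : Fin n → ℤ} {x : Fin n → ℝ} :
    x ∈ (dyadicAt k z).toSet ↔ ∀ i, ⌊x i / (2:ℝ)^k⌋ = z i := by
  have h2 : (0:ℝ) < (2:ℝ)^k := by positivity
  simp only [dyadicAt, Cube.toSet, mem_setOf_eq]
  refine forall_congr' fun i => ?_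
  rw [Int.floor_eq_iff]
  constructor
  · rintro ⟨h1, h3⟩
    constructor
    · rwa [le_div_iff₀ h2]
    · rw [div_lt_iff₀ h2]
      push_cast
      linarith
  · rintro ⟨h1, h3⟩
    constructor
    · rwa [le_div_iff₀ h2] at h1
    · rw [div_lt_iff₀ h2] at h3
      push_cast at h3
      linarith

lemma exists_dyadic_family (hδ0 : 0 < δ) (R : Cube n) :
    ∃ D : Fin (2^n) → Cube n,
      (∀ j, (D j).IsDyadic) ∧ R.toSet ⊆ ⋃ j, (D j).toSet ∧
      ∀ j, cost δ (D j) ≤ ENNReal.ofReal ((2:ℝ)^δ) * cost δ R := by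
  obtain ⟨k, hk1, hk2⟩ := exists_scale R.side R.side_pos
  have h2k : (0:ℝ) < (2:ℝ)^k := by positivity
  set z0 : Fin n → ℤ := fun i => ⌊R.corner i / (2:ℝ)^k⌋ with hz0
  have hcard : Fintype.card (Fin n → Bool) = 2^n := by simp
  set eb : (Fin n → Bool) ≃ Fin (2^n) := Fintype.equivFinOfCardEq hcard with heb
  refine ⟨fun j => dyadicAt k (fun i => z0 i + if (eb.symm j) i then 1 else 0), ?_, ?_, ?_⟩
  · intro j; exact dyadicAt_isDyadic
  · intro x hx
    set b : Fin n → Bool := fun i => decide (⌊x i / (2:ℝ)^k⌋ = z0 i + 1) with hb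
    refine mem_iUnion.2 ⟨eb b, ?_⟩
    rw [mem_dyadicAt]
    intro i
    rw [Equiv.symm_apply_apply]
    obtain ⟨hxl, hxu⟩ := hx i
    have hlow : z0 i ≤ ⌊x i / (2:ℝ)^k⌋ := by
      rw [hz0]
      exact Int.floor_le_floor (by gcongr)
    have hup : ⌊x i / (2:ℝ)^k⌋ ≤ z0 i + 1 := by
      have hx2 : x i ≤ R.corner i + (2:ℝ)^k := by linarith
      have : ⌊x i / (2:ℝ)^k⌋ ≤ ⌊(R.corner i + (2:ℝ)^k) / (2:ℝ)^k⌋ :=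
        Int.floor_le_floor (by gcongr)
      rw [add_div, div_self (ne_of_gt h2k), Int.floor_add_one] at this
      exact this
    by_cases hcase : ⌊x i / (2:ℝ)^k⌋ = z0 i + 1
    · simp [hb, hcase]
    · have : ⌊x i / (2:ℝ)^k⌋ = z0 i := by omega
      simp [hb, hcase, this]
  · intro j
    rw [cost, cost]
    show ENNReal.ofReal (((2:ℝ)^k) ^ δ) ≤ _
    rw [← ENNReal.ofReal_mul (by positivity)]
    apply ENNReal.ofReal_le_ofReal
    rw [← Real.mul_rpow (by norm_num) (le_of_lt R.side_pos)]
    exact Real.rpow_le_rpow (by positivity) hk2 (le_of_lt hδ0)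

lemma optCost_some (Q : Cube n) : optCost δ (some Q) = cost δ Q := rfl
lemma optCost_none : optCost δ (none : Option (Cube n)) = 0 := rfl
lemma optSet_some (Q : Cube n) : optSet (some Q) = Q.toSet := rfl

lemma dContent_le_cover_mul (hδ0 : 0 < δ) {E : Set (Fin n → ℝ)} (Qs : ℕ → Cube n)
    (hcov : E ⊆ ⋃ i, (Qs i).toSet) :
    dContent n δ E ≤ (2^n : ℝ≥0∞) * ENNReal.ofReal ((2:ℝ)^δ) * ∑' i, cost δ (Qs i) := by
  choose D hDdy hDcov hDcost using fun i => exists_dyadic_family hδ0 (Qs i)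
  set e : ℕ × ℕ ≃ ℕ := Denumerable.eqv (ℕ × ℕ) with he
  set C : ℕ → Option (Cube n) := fun m =>
    if h : (e.symm m).2 < 2^n then some (D (e.symm m).1 ⟨(e.symm m).2, h⟩) else none with hC
  have hCeq : ∀ (i : ℕ) (j : Fin (2^n)), C (e (i, (j:ℕ))) = some (D i j) := by
    intro i j
    simp only [hC, Equiv.symm_apply_apply]
    try rw [dif_pos (show ((i,(j:ℕ)).2) < 2^n from j.isLt)]
  have hCnone : ∀ (i j : ℕ), ¬ j < 2^n → C (e (i, j)) = none := by
    intro i j hj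
    simp only [hC, Equiv.symm_apply_apply]
    exact dif_neg hj
  have hdy : ∀ m Q, C m = some Q → Q.IsDyadic := by
    intro m Q hQ
    simp only [hC] at hQ
    split_ifs at hQ with h
    rw [Option.some.injEq] at hQ
    rw [← hQ]
    exact hDdy _ _
  have hcov2 : E ⊆ ⋃ m, optSet (C m) := by
    intro x hx
    obtain ⟨i, hi⟩ := mem_iUnion.1 (hcov hx)
    obtain ⟨j, hj⟩ := mem_iUnion.1 (hDcov i hi)
    refine mem_iUnion.2 ⟨e (i, (j : ℕ)), ?_⟩
    rw [hCeq i j, optSet_some]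
    exact hj
  refine (dContent_le_partial hδ0 C hdy hcov2).trans ?_
  have hre : ∑' m, optCost δ (C m) = ∑' p : ℕ × ℕ, optCost δ (C (e p)) :=
    (Equiv.tsum_eq e fun m => optCost δ (C m)).symm
  have hprod : ∑' (p : ℕ × ℕ), optCost δ (C (e p)) =
      ∑' (i : ℕ) (j : ℕ), optCost δ (C (e (i, j))) := ENNReal.tsum_prod (f := fun i j => optCost δ (C (e (i, j))))
  rw [hre, hprod]
  have hinner : ∀ i, (∑' j : ℕ, optCost δ (C (e (i, j)))) ≤
      (2^n : ℝ≥0∞) * (ENNReal.ofReal ((2:ℝ)^δ) * cost δ (Qs i)) := by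
    intro i
    calc (∑' j : ℕ, optCost δ (C (e (i, j))))
        = ∑ j ∈ Finset.range (2^n), optCost δ (C (e (i, j))) := by
          refine tsum_eq_sum fun j hj => ?_
          simp only [Finset.mem_range] at hj
          rw [hCnone i j (not_lt.2 (le_of_not_gt hj)), optCost_none]
      _ ≤ ∑ _j ∈ Finset.range (2^n), ENNReal.ofReal ((2:ℝ)^δ) * cost δ (Qs i) := by
          refine Finset.sum_le_sum fun j hj => ?_
          simp only [Finset.mem_range] at hj
          rw [show (j:ℕ) = ((⟨j, hj⟩ : Fin (2^n)):ℕ) from rfl, hCeq i ⟨j, hj⟩, optCost_some]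
          exact hDcost i _
      _ = (2^n : ℝ≥0∞) * (ENNReal.ofReal ((2:ℝ)^δ) * cost δ (Qs i)) := by
          rw [Finset.sum_const, Finset.card_range, nsmul_eq_mul]
          push_cast
          ring
  calc (∑' i, ∑' j : ℕ, optCost δ (C (e (i, j))))
      ≤ ∑' i, (2^n : ℝ≥0∞) * (ENNReal.ofReal ((2:ℝ)^δ) * cost δ (Qs i)) :=
        ENNReal.tsum_le_tsum hinner
    _ = (2^n : ℝ≥0∞) * ENNReal.ofReal ((2:ℝ)^δ) * ∑' i, cost δ (Qs i) := by
        rw [ENNReal.tsum_mul_left (a := (2^n : ℝ≥0∞))]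
        rw [ENNReal.tsum_mul_left (a := ENNReal.ofReal ((2:ℝ)^δ))]
        ring

lemma dContent_le_hContent (hδ0 : 0 < δ) (E : Set (Fin n → ℝ)) :
    dContent n δ E ≤ (2^n : ℝ≥0∞) * ENNReal.ofReal ((2:ℝ)^δ) * hContent n δ E := by
  set c : ℝ≥0∞ := (2^n : ℝ≥0∞) * ENNReal.ofReal ((2:ℝ)^δ) with hc
  by_cases hH : hContent n δ E = ∞
  · rw [hH]
    have hc0 : c ≠ 0 := by
      rw [hc]
      refine mul_ne_zero (by positivity) ?_
      simp only [ne_eq, ENNReal.ofReal_eq_zero, not_le]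
      positivity
    rw [ENNReal.mul_top hc0]
    exact le_top
  refine ENNReal.le_of_forall_pos_le_add fun ε hε _ => ?_
  have hct : c ≠ ∞ := by
    rw [hc]
    exact ENNReal.mul_ne_top (by simp) ENNReal.ofReal_ne_top
  -- find a cover of E with sum close to hContent
  have hlt : hContent n δ E < hContent n δ E + ε / c := by
    refine ENNReal.lt_add_right hH ?_
    simp only [ne_eq, ENNReal.div_eq_zero_iff, not_or]
    exact ⟨by exact_mod_cast ne_of_gt hε, hct⟩
  rw [hContent, iInf_lt_iff] at hlt
  obtain ⟨Qs, hQs⟩ := hlt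
  rw [iInf_lt_iff] at hQs
  obtain ⟨hcov, hsum⟩ := hQs
  have hc0 : c ≠ 0 := by
    rw [hc]
    refine mul_ne_zero (by positivity) ?_
    simp only [ne_eq, ENNReal.ofReal_eq_zero, not_le]
    positivity
  calc dContent n δ E ≤ c * ∑' i, cost δ (Qs i) := dContent_le_cover_mul hδ0 Qs hcov
    _ ≤ c * (hContent n δ E + ε / c) := by gcongr; exact le_of_lt hsum
    _ = c * hContent n δ E + c * (ε / c) := by rw [mul_add]
    _ ≤ c * hContent n δ E + ε := by
        gcongr
        exact ENNReal.mul_div_le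


lemma toSet_eq_pi (Q : Cube n) :
    Q.toSet = Set.pi univ (fun i => Ico (Q.corner i) (Q.corner i + Q.side)) := by
  ext x
  simp [Cube.toSet, Set.mem_pi, mem_Ico]

lemma volume_toSet (Q : Cube n) : volume Q.toSet = ENNReal.ofReal (Q.side ^ (n:ℕ)) := by
  rw [toSet_eq_pi, volume_pi_pi]
  simp only [Real.volume_Ico, add_sub_cancel_left]
  rw [Finset.prod_const, Finset.card_univ, Fintype.card_fin,
    ENNReal.ofReal_pow (le_of_lt Q.side_pos)]

lemma le_dContent_cube (hδ0 : 0 < δ) (hδn : δ ≤ n) (Q : Cube n) :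
    ENNReal.ofReal (Q.side ^ δ) ≤ dContent n δ Q.toSet := by
  refine le_iInf fun Qs => le_iInf fun hQ => ?_
  obtain ⟨-, hcov⟩ := hQ
  by_cases hex : ∃ i, Q.side ≤ (Qs i).side
  · obtain ⟨i, hi⟩ := hex
    calc ENNReal.ofReal (Q.side ^ δ) ≤ ENNReal.ofReal ((Qs i).side ^ δ) := by
          apply ENNReal.ofReal_le_ofReal
          exact Real.rpow_le_rpow (le_of_lt Q.side_pos) hi (le_of_lt hδ0)
      _ ≤ ∑' i, ENNReal.ofReal ((Qs i).side ^ δ) := ENNReal.le_tsum i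
  · push_neg at hex
    have hside : ∀ i, (0:ℝ) < (Qs i).side := fun i => (Qs i).side_pos
    have hvol : ENNReal.ofReal (Q.side ^ (n:ℕ)) ≤ ∑' i, ENNReal.ofReal ((Qs i).side ^ (n:ℕ)) := by
      rw [← volume_toSet Q]
      calc volume Q.toSet ≤ volume (⋃ i, (Qs i).toSet) := measure_mono hcov
        _ ≤ ∑' i, volume (Qs i).toSet := measure_iUnion_le _
        _ = ∑' i, ENNReal.ofReal ((Qs i).side ^ (n:ℕ)) := tsum_congr fun i => volume_toSet _
    have epow : ∀ s : ℝ, 0 < s → s ^ ((n:ℝ)) = s ^ δ * s ^ ((n:ℝ) - δ) := by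
      intro s hs
      rw [← Real.rpow_add hs]
      congr 1
      ring
    have hkey : ∀ i, ENNReal.ofReal ((Qs i).side ^ (n:ℕ)) ≤
        ENNReal.ofReal ((Qs i).side ^ δ) * ENNReal.ofReal (Q.side ^ ((n:ℝ) - δ)) := by
      intro i
      rw [← ENNReal.ofReal_mul (le_of_lt (Real.rpow_pos_of_pos (hside i) δ))]
      apply ENNReal.ofReal_le_ofReal
      rw [← Real.rpow_natCast ((Qs i).side) n, epow _ (hside i)]
      refine mul_le_mul_of_nonneg_left ?_ (le_of_lt (Real.rpow_pos_of_pos (hside i) δ))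
      exact Real.rpow_le_rpow (le_of_lt (hside i)) (le_of_lt (hex i)) (by linarith)
    have h2 : ENNReal.ofReal (Q.side ^ (n:ℕ)) ≤
        (∑' i, ENNReal.ofReal ((Qs i).side ^ δ)) * ENNReal.ofReal (Q.side ^ ((n:ℝ) - δ)) := by
      rw [← ENNReal.tsum_mul_right]
      exact hvol.trans (ENNReal.tsum_le_tsum hkey)
    have h3 : ENNReal.ofReal (Q.side ^ (n:ℕ)) =
        ENNReal.ofReal (Q.side ^ δ) * ENNReal.ofReal (Q.side ^ ((n:ℝ) - δ)) := by
      rw [← ENNReal.ofReal_mul (le_of_lt (Real.rpow_pos_of_pos Q.side_pos δ))]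
      congr 1
      rw [← Real.rpow_natCast Q.side n, epow _ Q.side_pos]
    rw [h3] at h2
    have hne0 : ENNReal.ofReal (Q.side ^ ((n:ℝ) - δ)) ≠ 0 := by
      simp only [ne_eq, ENNReal.ofReal_eq_zero, not_le]
      exact Real.rpow_pos_of_pos Q.side_pos _
    exact (ENNReal.mul_le_mul_iff_left hne0 ENNReal.ofReal_ne_top).1 h2

lemma dContent_lt_top (hδ0 : 0 < δ) {E : Set (Fin n → ℝ)} {Q : Cube n} (h : E ⊆ Q.toSet) :
    dContent n δ E < ⊤ := by
  calc dContent n δ E ≤ (2^n : ℝ≥0∞) * ENNReal.ofReal ((2:ℝ)^δ) * hContent n δ E :=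
        dContent_le_hContent hδ0 E
    _ ≤ (2^n : ℝ≥0∞) * ENNReal.ofReal ((2:ℝ)^δ) * cost δ Q := by
        gcongr
        exact hContent_le_cube hδ0 h
    _ < ⊤ := by
        apply ENNReal.mul_lt_top
        · exact ENNReal.mul_lt_top (ENNReal.pow_lt_top (by norm_num)) ENNReal.ofReal_lt_top
        · exact ENNReal.ofReal_lt_top

lemma isCompact_closure_toSet (Q : Cube n) : IsCompact (closure Q.toSet) := by
  have hsub : Q.toSet ⊆ Set.pi univ (fun i => Icc (Q.corner i) (Q.corner i + Q.side)) := by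
    intro x hx i _
    exact ⟨(hx i).1, le_of_lt (hx i).2⟩
  have hcomp : IsCompact (Set.pi univ (fun i => Icc (Q.corner i) (Q.corner i + Q.side))) :=
    isCompact_univ_pi fun i => isCompact_Icc
  refine IsCompact.of_isClosed_subset hcomp isClosed_closure ?_
  exact closure_minimal hsub (isClosed_set_pi fun i _ => isClosed_Icc)


lemma levelSet_antitone (g : (Fin n → ℝ) → ℝ) (E : Set (Fin n → ℝ)) :
    Antitone (fun t : ℝ => dContent n δ {x | x ∈ E ∧ t < g x}) := fun s t hst =>
  dContent_mono fun x hx => ⟨hx.1, lt_of_le_of_lt hst hx.2⟩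

lemma levelSet_monotone' (g : (Fin n → ℝ) → ℝ) (E : Set (Fin n → ℝ)) (c : ℝ) :
    Monotone (fun t : ℝ => dContent n δ {x | x ∈ E ∧ c - t < g x}) := fun s t hst =>
  dContent_mono fun x hx => ⟨hx.1, lt_of_le_of_lt (by linarith) hx.2⟩

lemma integD_mono {g h : (Fin n → ℝ) → ℝ} {E : Set (Fin n → ℝ)}
    (hgh : ∀ x ∈ E, g x ≤ h x) : integD n δ g E ≤ integD n δ h E :=
  lintegral_mono fun t => dContent_mono fun x hx => ⟨hx.1, lt_of_lt_of_le hx.2 (hgh x hx.1)⟩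

lemma integD_le_of_subset {g : (Fin n → ℝ) → ℝ} {E F : Set (Fin n → ℝ)} (h : E ⊆ F) :
    integD n δ g E ≤ integD n δ g F :=
  lintegral_mono fun t => dContent_mono fun x hx => ⟨h hx.1, hx.2⟩

lemma lintegral_Ioi_scale (F : ℝ → ℝ≥0∞) {k : ℝ} (hk : 0 < k) :
    ∫⁻ t in Ioi (0:ℝ), F (k⁻¹ * t) = ENNReal.ofReal k * ∫⁻ t in Ioi (0:ℝ), F t := by
  have hk' : (k⁻¹ : ℝ) ≠ 0 := inv_ne_zero (ne_of_gt hk)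
  have hmeas : Measurable (fun t : ℝ => k⁻¹ * t) := measurable_const_mul _
  have hemb : MeasurableEmbedding (fun t : ℝ => k⁻¹ * t) :=
    (MeasurableEquiv.mulLeft₀ (k⁻¹ : ℝ) hk').measurableEmbedding
  have hpre : (fun t : ℝ => k⁻¹ * t) ⁻¹' (Ioi 0) = Ioi 0 := by
    rw [Set.preimage_const_mul_Ioi₀ (0:ℝ) (by positivity : (0:ℝ) < k⁻¹)]
    norm_num
  calc ∫⁻ t in Ioi (0:ℝ), F (k⁻¹ * t)
      = ∫⁻ t, F t ∂(Measure.map (fun t : ℝ => k⁻¹ * t) (volume.restrict (Ioi 0))) :=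
        (hemb.lintegral_map F).symm
    _ = ∫⁻ t, F t ∂((Measure.map (fun t : ℝ => k⁻¹ * t) volume).restrict (Ioi 0)) := by
        rw [Measure.restrict_map hmeas measurableSet_Ioi, hpre]
    _ = ENNReal.ofReal k * ∫⁻ t in Ioi (0:ℝ), F t := by
        rw [Real.map_volume_mul_left hk', Measure.restrict_smul, lintegral_smul_measure,
          inv_inv, abs_of_pos hk, smul_eq_mul]

lemma lintegral_Ici_shift (F : ℝ → ℝ≥0∞) (c : ℝ) :
    ∫⁻ t in Ici c, F t = ∫⁻ s in Ici (0:ℝ), F (s + c) := by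
  have h := (measurePreserving_add_right volume c).setLIntegral_comp_emb
    (measurableEmbedding_addRight c) F (Ici 0)
  rw [h, image_add_const_Ici, zero_add]

lemma lintegral_reflect (F : ℝ → ℝ≥0∞) (c a b : ℝ) :
    ∫⁻ t in Ioo a b, F (c - t) = ∫⁻ u in Ioo (c - b) (c - a), F u := by
  have hemb : MeasurableEmbedding (fun t : ℝ => c - t) := by
    have h : (fun x : ℝ => c - x) = fun x => (-x) + c := by ext x; ring
    rw [h]
    exact (measurableEmbedding_addRight c).comp (MeasurableEquiv.neg ℝ).measurableEmbedding
  have h := (Measure.measurePreserving_sub_left volume c).setLIntegral_comp_emb hemb F (Ioo a b)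
  rw [h, image_const_sub_Ioo]

lemma lintegral_Ici_eq_Ioi (F : ℝ → ℝ≥0∞) (c : ℝ) :
    ∫⁻ t in Ici c, F t = ∫⁻ t in Ioi c, F t := by
  rw [Measure.restrict_congr_set Ioi_ae_eq_Ici.symm]

lemma integD_const_mul {g : (Fin n → ℝ) → ℝ} {E : Set (Fin n → ℝ)} {k : ℝ} (hk : 0 < k) :
    integD n δ (fun x => k * g x) E = ENNReal.ofReal k * integD n δ g E := by
  have hset : ∀ t : ℝ, {x | x ∈ E ∧ t < k * g x} = {x | x ∈ E ∧ k⁻¹ * t < g x} := by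
    intro t
    ext x
    simp only [mem_setOf_eq, and_congr_right_iff]
    intro _
    rw [inv_mul_eq_div, div_lt_iff₀ hk, mul_comm]
  rw [integD, integD]
  calc ∫⁻ t in Ioi (0:ℝ), dContent n δ {x | x ∈ E ∧ t < k * g x}
      = ∫⁻ t in Ioi (0:ℝ), dContent n δ {x | x ∈ E ∧ k⁻¹ * t < g x} := by
        refine lintegral_congr fun t => ?_
        rw [hset t]
    _ = ENNReal.ofReal k * ∫⁻ t in Ioi (0:ℝ), dContent n δ {x | x ∈ E ∧ t < g x} :=
        lintegral_Ioi_scale (fun u => dContent n δ {x | x ∈ E ∧ u < g x}) hk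

lemma integD_add_const {g : (Fin n → ℝ) → ℝ} {E : Set (Fin n → ℝ)} {c : ℝ} (hc : 0 ≤ c)
    (hg : ∀ x ∈ E, 0 ≤ g x) :
    ENNReal.ofReal c * dContent n δ E + integD n δ g E ≤ integD n δ (fun x => c + g x) E := by
  rcases eq_or_lt_of_le hc with hc0 | hc0
  · rw [← hc0]
    simp only [ENNReal.ofReal_zero, zero_mul, zero_add]
    exact integD_mono fun x hx => by linarith
  have hsplit : integD n δ (fun x => c + g x) E =
      (∫⁻ t in Ioo (0:ℝ) c, dContent n δ {x | x ∈ E ∧ t < c + g x}) +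
      (∫⁻ t in Ici c, dContent n δ {x | x ∈ E ∧ t < c + g x}) := by
    rw [integD, show Ioi (0:ℝ) = Ioo 0 c ∪ Ici c from (Ioo_union_Ici_eq_Ioi hc0).symm,
      lintegral_union measurableSet_Ici
        (Set.disjoint_left.2 fun t ht1 ht2 => absurd ht1.2 (not_lt.2 ht2))]
  rw [hsplit]
  have h1 : ENNReal.ofReal c * dContent n δ E ≤
      ∫⁻ t in Ioo (0:ℝ) c, dContent n δ {x | x ∈ E ∧ t < c + g x} := by
    have := setLIntegral_const (μ := volume) (Ioo (0:ℝ) c) (dContent n δ E)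
    calc ENNReal.ofReal c * dContent n δ E
        = ∫⁻ _t in Ioo (0:ℝ) c, dContent n δ E := by
          rw [setLIntegral_const, Real.volume_Ioo, sub_zero, mul_comm]
      _ ≤ ∫⁻ t in Ioo (0:ℝ) c, dContent n δ {x | x ∈ E ∧ t < c + g x} := by
          refine setLIntegral_mono ((levelSet_antitone (fun x => c + g x) E).measurable) ?_
          intro t ht
          refine dContent_mono fun x hx => ⟨hx, ?_⟩
          have h1 := hg x hx
          have h2 := ht.2
          linarith
  have h2 : integD n δ g E ≤ ∫⁻ t in Ici c, dContent n δ {x | x ∈ E ∧ t < c + g x} := by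
    rw [lintegral_Ici_shift (fun t => dContent n δ {x | x ∈ E ∧ t < c + g x}) c]
    have heq : ∀ s : ℝ, {x | x ∈ E ∧ s + c < c + g x} = {x | x ∈ E ∧ s < g x} := by
      intro s
      ext x
      constructor <;> rintro ⟨h1, h2⟩ <;> exact ⟨h1, by linarith⟩
    refine le_of_eq ?_
    calc integD n δ g E
        = ∫⁻ s in Ioi (0:ℝ), dContent n δ {x | x ∈ E ∧ s < g x} := rfl
      _ = ∫⁻ s in Ici (0:ℝ), dContent n δ {x | x ∈ E ∧ s < g x} :=
          (lintegral_Ici_eq_Ioi _ 0).symm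
      _ = ∫⁻ s in Ici (0:ℝ), dContent n δ {x | x ∈ E ∧ s + c < c + g x} := by
          refine lintegral_congr fun s => ?_
          rw [heq s]
  exact add_le_add h1 h2

lemma integD_sub_const {g : (Fin n → ℝ) → ℝ} {E : Set (Fin n → ℝ)} {s : ℝ} (hs : 0 ≤ s) :
    integD n δ g E ≤ integD n δ (fun x => g x - s) E + ENNReal.ofReal s * dContent n δ E := by
  rcases eq_or_lt_of_le hs with hs0 | hs0
  · rw [← hs0]
    simp only [ENNReal.ofReal_zero, zero_mul, add_zero]
    exact integD_mono fun x hx => by linarith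
  rw [integD, show Ioi (0:ℝ) = Ioo 0 s ∪ Ici s from (Ioo_union_Ici_eq_Ioi hs0).symm,
    lintegral_union measurableSet_Ici
      (Set.disjoint_left.2 fun t ht1 ht2 => absurd ht1.2 (not_lt.2 ht2))]
  rw [add_comm (integD n δ (fun x => g x - s) E)]
  refine add_le_add ?_ ?_
  · calc ∫⁻ t in Ioo (0:ℝ) s, dContent n δ {x | x ∈ E ∧ t < g x}
        ≤ ∫⁻ _t in Ioo (0:ℝ) s, dContent n δ E := by
          refine setLIntegral_mono measurable_const ?_
          intro t _
          exact dContent_mono fun x hx => hx.1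
      _ = ENNReal.ofReal s * dContent n δ E := by
          rw [setLIntegral_const, Real.volume_Ioo, sub_zero, mul_comm]
  · rw [lintegral_Ici_shift (fun t => dContent n δ {x | x ∈ E ∧ t < g x}) s]
    have heq : ∀ u : ℝ, {x | x ∈ E ∧ u + s < g x} = {x | x ∈ E ∧ u < g x - s} := by
      intro u
      ext x
      constructor <;> rintro ⟨h1, h2⟩ <;> exact ⟨h1, by linarith⟩
    refine le_of_eq ?_
    calc ∫⁻ u in Ici (0:ℝ), dContent n δ {x | x ∈ E ∧ u + s < g x}
        = ∫⁻ u in Ici (0:ℝ), dContent n δ {x | x ∈ E ∧ u < g x - s} := by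
          refine lintegral_congr fun u => ?_
          rw [heq u]
      _ = ∫⁻ u in Ioi (0:ℝ), dContent n δ {x | x ∈ E ∧ u < g x - s} :=
          lintegral_Ici_eq_Ioi _ 0
      _ = integD n δ (fun x => g x - s) E := rfl

lemma integD_const_sub {g : (Fin n → ℝ) → ℝ} {E : Set (Fin n → ℝ)} {s : ℝ} (hs : 0 ≤ s)
    (hg : ∀ x ∈ E, 0 ≤ g x) (hE : dContent n δ E ≠ ∞) :
    ENNReal.ofReal s * dContent n δ E ≤
      integD n δ (fun x => s - g x) E + integD n δ g E := by
  rcases eq_or_lt_of_le hs with hs0 | hs0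
  · rw [← hs0]
    simp
  by_cases hE0 : dContent n δ E = 0
  · rw [hE0, mul_zero]
    exact zero_le
  have hEpos : 0 < (dContent n δ E).toReal := ENNReal.toReal_pos hE0 hE
  refine ENNReal.le_of_forall_pos_le_add fun ε' hε' _ => ?_
  set ε : ℝ := (ε' : ℝ) / (dContent n δ E).toReal with hεdef
  have hε : 0 < ε := by positivity
  -- pointwise estimate
  have hpt : ∀ t ∈ Ioo (0:ℝ) s, dContent n δ E ≤
      dContent n δ {x | x ∈ E ∧ t < s - g x} +
      dContent n δ {x | x ∈ E ∧ (s - ε) - t < g x} := by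
    intro t _
    have hcover : E ⊆ {x | x ∈ E ∧ t < s - g x} ∪ {x | x ∈ E ∧ (s - ε) - t < g x} := by
      intro x hx
      by_cases hgx : g x < s - t
      · exact Or.inl ⟨hx, by linarith⟩
      · exact Or.inr ⟨hx, by push_neg at hgx; linarith⟩
    calc dContent n δ E ≤ dContent n δ ({x | x ∈ E ∧ t < s - g x} ∪
          {x | x ∈ E ∧ (s - ε) - t < g x}) := dContent_mono hcover
      _ ≤ _ := dContent_union
  have hint : ENNReal.ofReal s * dContent n δ E ≤
      (∫⁻ t in Ioo (0:ℝ) s, dContent n δ {x | x ∈ E ∧ t < s - g x}) +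
      (∫⁻ t in Ioo (0:ℝ) s, dContent n δ {x | x ∈ E ∧ (s - ε) - t < g x}) := by
    calc ENNReal.ofReal s * dContent n δ E
        = ∫⁻ _t in Ioo (0:ℝ) s, dContent n δ E := by
          rw [setLIntegral_const, Real.volume_Ioo, sub_zero, mul_comm]
      _ ≤ ∫⁻ t in Ioo (0:ℝ) s, (dContent n δ {x | x ∈ E ∧ t < s - g x} +
            dContent n δ {x | x ∈ E ∧ (s - ε) - t < g x}) := by
          refine setLIntegral_mono ?_ hpt
          exact ((levelSet_antitone (fun x => s - g x) E).measurable).add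
            ((levelSet_monotone' g E (s - ε)).measurable)
      _ = _ := by
          rw [lintegral_add_left ((levelSet_antitone (fun x => s - g x) E).measurable)]
  have hX : (∫⁻ t in Ioo (0:ℝ) s, dContent n δ {x | x ∈ E ∧ t < s - g x}) ≤
      integD n δ (fun x => s - g x) E :=
    lintegral_mono_set Ioo_subset_Ioi_self
  have hY : (∫⁻ t in Ioo (0:ℝ) s, dContent n δ {x | x ∈ E ∧ (s - ε) - t < g x}) ≤
      integD n δ g E + ↑ε' := by
    have hrefl := lintegral_reflect (fun u => dContent n δ {x | x ∈ E ∧ u < g x}) (s - ε) 0 s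
    calc (∫⁻ t in Ioo (0:ℝ) s, dContent n δ {x | x ∈ E ∧ (s - ε) - t < g x})
        = ∫⁻ u in Ioo (s - ε - s) (s - ε - 0), dContent n δ {x | x ∈ E ∧ u < g x} := hrefl
      _ ≤ ∫⁻ u in Ioc (-ε) 0 ∪ Ioi (0:ℝ), dContent n δ {x | x ∈ E ∧ u < g x} := by
          refine lintegral_mono_set ?_
          intro u hu
          simp only [mem_Ioo] at hu
          rcases le_or_gt u 0 with h | h
          · exact Or.inl ⟨by linarith [hu.1], h⟩
          · exact Or.inr h
      _ ≤ (∫⁻ u in Ioc (-ε) 0, dContent n δ {x | x ∈ E ∧ u < g x}) +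
          (∫⁻ u in Ioi (0:ℝ), dContent n δ {x | x ∈ E ∧ u < g x}) := lintegral_union_le _ _ _
      _ ≤ ↑ε' + integD n δ g E := by
          refine add_le_add ?_ le_rfl
          calc (∫⁻ u in Ioc (-ε) 0, dContent n δ {x | x ∈ E ∧ u < g x})
              ≤ ∫⁻ _u in Ioc (-ε) (0:ℝ), dContent n δ E := by
                refine setLIntegral_mono measurable_const ?_
                intro u _
                exact dContent_mono fun x hx => hx.1
            _ = dContent n δ E * ENNReal.ofReal ε := by
                rw [setLIntegral_const, Real.volume_Ioc]
                norm_num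
            _ = ↑ε' := by
                rw [← ENNReal.ofReal_toReal hE, ← ENNReal.ofReal_mul ENNReal.toReal_nonneg,
                  hεdef, mul_div_cancel₀ _ (ne_of_gt hEpos)]
                exact ENNReal.ofReal_coe_nnreal
      _ = integD n δ g E + ↑ε' := by rw [add_comm]
  calc ENNReal.ofReal s * dContent n δ E ≤ _ := hint
    _ ≤ integD n δ (fun x => s - g x) E + (integD n δ g E + ↑ε') := add_le_add hX hY
    _ = integD n δ (fun x => s - g x) E + integD n δ g E + ↑ε' := by rw [add_assoc]


lemma tangent_line (a x : ℝ) : Real.exp a * ((1 - a) + x) ≤ Real.exp x := by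
  have h := Real.add_one_le_exp (x - a)
  calc Real.exp a * ((1 - a) + x) = Real.exp a * ((x - a) + 1) := by ring
    _ ≤ Real.exp a * Real.exp (x - a) :=
        mul_le_mul_of_nonneg_left h (le_of_lt (Real.exp_pos a))
    _ = Real.exp x := by rw [← Real.exp_add]; congr 1; ring

lemma core (hδ0 : 0 < δ) {E1 E2 : Set (Fin n → ℝ)} {f1 f2 : (Fin n → ℝ) → ℝ}
    (h1 : ∀ x ∈ E1, 0 ≤ f1 x) (h2 : ∀ x ∈ E2, 0 ≤ f2 x)
    (hA : integD n δ f1 E1 ≠ ∞) (hB : integD n δ f2 E2 ≠ ∞)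
    (hc1 : dContent n δ E1 ≠ ∞) (hc2 : dContent n δ E2 ≠ ∞)
    (hd : 0 < (dContent n δ E1).toReal + (dContent n δ E2).toReal) :
    ENNReal.ofReal (Real.exp (((integD n δ f1 E1).toReal - (integD n δ f2 E2).toReal) /
        ((dContent n δ E1).toReal + (dContent n δ E2).toReal))) *
      (dContent n δ E1 + dContent n δ E2) ≤
    integD n δ (fun x => Real.exp (f1 x)) E1 +
      integD n δ (fun x => Real.exp (-f2 x)) E2 := by
  set μ1 := dContent n δ E1 with hμ1
  set μ2 := dContent n δ E2 with hμ2
  set A := integD n δ f1 E1 with hAdef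
  set B := integD n δ f2 E2 with hBdef
  set I1 := integD n δ (fun x => Real.exp (f1 x)) E1 with hI1def
  set I2 := integD n δ (fun x => Real.exp (-f2 x)) E2 with hI2def
  set c1' := μ1.toReal with hc1'
  set c2' := μ2.toReal with hc2'
  set A' := A.toReal with hA'
  set B' := B.toReal with hB'
  set d := c1' + c2' with hddef
  set a := (A' - B') / d with hadef
  have had : a * d = A' - B' := div_mul_cancel₀ _ (ne_of_gt hd)
  have hc1nn : 0 ≤ c1' := ENNReal.toReal_nonneg
  have hc2nn : 0 ≤ c2' := ENNReal.toReal_nonneg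
  have hAnn : 0 ≤ A' := ENNReal.toReal_nonneg
  have hBnn : 0 ≤ B' := ENNReal.toReal_nonneg
  have hμ1eq : μ1 = ENNReal.ofReal c1' := (ENNReal.ofReal_toReal hc1).symm
  have hμ2eq : μ2 = ENNReal.ofReal c2' := (ENNReal.ofReal_toReal hc2).symm
  have hAeq : A = ENNReal.ofReal A' := (ENNReal.ofReal_toReal hA).symm
  have hBeq : B = ENNReal.ofReal B' := (ENNReal.ofReal_toReal hB).symm
  have hea : (0:ℝ) < Real.exp a := Real.exp_pos a
  rcases le_or_gt a 1 with hcase | hcase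
  · -- a ≤ 1
    have hI1 : ENNReal.ofReal (Real.exp a) * (ENNReal.ofReal (1-a) * μ1 + A) ≤ I1 := by
      calc ENNReal.ofReal (Real.exp a) * (ENNReal.ofReal (1-a) * μ1 + A)
          ≤ ENNReal.ofReal (Real.exp a) * integD n δ (fun x => (1-a) + f1 x) E1 := by
            gcongr
            exact integD_add_const (by linarith) h1
        _ = integD n δ (fun x => Real.exp a * ((1-a) + f1 x)) E1 :=
            (integD_const_mul hea).symm
        _ ≤ I1 := integD_mono fun x _ => tangent_line a (f1 x)
    have hI2 : ENNReal.ofReal (Real.exp a) * integD n δ (fun x => (1-a) - f2 x) E2 ≤ I2 := by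
      calc ENNReal.ofReal (Real.exp a) * integD n δ (fun x => (1-a) - f2 x) E2
          = integD n δ (fun x => Real.exp a * ((1-a) - f2 x)) E2 :=
            (integD_const_mul hea).symm
        _ ≤ I2 := by
            refine integD_mono fun x _ => ?_
            have h := tangent_line a (-f2 x)
            calc Real.exp a * ((1-a) - f2 x) = Real.exp a * ((1-a) + (-f2 x)) := by ring
              _ ≤ Real.exp (-f2 x) := h
    have hL : ENNReal.ofReal (1-a) * μ2 ≤ integD n δ (fun x => (1-a) - f2 x) E2 + B :=
      integD_const_sub (by linarith) h2 hc2
    have hreal : (c1' + c2') + B' ≤ ((1-a) * c1' + A') + (1-a) * c2' := by nlinarith [had]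
    have hinner : (μ1 + μ2) + B ≤ (ENNReal.ofReal (1-a) * μ1 + A) +
        ENNReal.ofReal (1-a) * μ2 := by
      rw [hμ1eq, hμ2eq, hAeq, hBeq, ← ENNReal.ofReal_mul (by linarith : (0:ℝ) ≤ 1-a),
        ← ENNReal.ofReal_mul (by linarith : (0:ℝ) ≤ 1-a), ← ENNReal.ofReal_add hc1nn hc2nn,
        ← ENNReal.ofReal_add (by positivity) hBnn,
        ← ENNReal.ofReal_add (by nlinarith) hAnn,
        ← ENNReal.ofReal_add (by nlinarith) (by nlinarith)]
      exact ENNReal.ofReal_le_ofReal hreal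
    have hstep : ENNReal.ofReal (Real.exp a) * ((μ1 + μ2) + B) ≤
        ENNReal.ofReal (Real.exp a) * ((ENNReal.ofReal (1-a) * μ1 + A) +
          ENNReal.ofReal (1-a) * μ2) := mul_le_mul_right hinner _
    have hmain : ENNReal.ofReal (Real.exp a) * (μ1 + μ2) + ENNReal.ofReal (Real.exp a) * B ≤
        (I1 + I2) + ENNReal.ofReal (Real.exp a) * B := by
      calc ENNReal.ofReal (Real.exp a) * (μ1 + μ2) + ENNReal.ofReal (Real.exp a) * B
          = ENNReal.ofReal (Real.exp a) * ((μ1 + μ2) + B) := by ring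
        _ ≤ ENNReal.ofReal (Real.exp a) * ((ENNReal.ofReal (1-a) * μ1 + A) +
              ENNReal.ofReal (1-a) * μ2) := hstep
        _ ≤ ENNReal.ofReal (Real.exp a) * ((ENNReal.ofReal (1-a) * μ1 + A) +
              (integD n δ (fun x => (1-a) - f2 x) E2 + B)) :=
            mul_le_mul_right (add_le_add_right hL _) _
        _ = ENNReal.ofReal (Real.exp a) * (ENNReal.ofReal (1-a) * μ1 + A) +
            (ENNReal.ofReal (Real.exp a) * integD n δ (fun x => (1-a) - f2 x) E2 +
              ENNReal.ofReal (Real.exp a) * B) := by ring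
        _ ≤ I1 + (I2 + ENNReal.ofReal (Real.exp a) * B) :=
            add_le_add hI1 (add_le_add_left hI2 _)
        _ = (I1 + I2) + ENNReal.ofReal (Real.exp a) * B := by ring
    have hfin : ENNReal.ofReal (Real.exp a) * B ≠ ∞ :=
      ENNReal.mul_ne_top ENNReal.ofReal_ne_top hB
    exact (ENNReal.add_le_add_iff_right hfin).1 hmain
  · -- 1 < a
    set s := a - 1 with hsdef
    have hs0 : (0:ℝ) < s := by simp only [hsdef]; linarith
    have hI1 : ENNReal.ofReal (Real.exp a) * integD n δ (fun x => f1 x - s) E1 ≤ I1 := by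
      calc ENNReal.ofReal (Real.exp a) * integD n δ (fun x => f1 x - s) E1
          = integD n δ (fun x => Real.exp a * (f1 x - s)) E1 := (integD_const_mul hea).symm
        _ ≤ I1 := by
            refine integD_mono fun x _ => ?_
            have h := tangent_line a (f1 x)
            calc Real.exp a * (f1 x - s) = Real.exp a * ((1-a) + f1 x) := by
                  simp only [hsdef]; ring
              _ ≤ Real.exp (f1 x) := h
    have hsub : A ≤ integD n δ (fun x => f1 x - s) E1 + ENNReal.ofReal s * μ1 :=
      integD_sub_const (le_of_lt hs0)
    set X := ENNReal.ofReal (Real.exp a * s) * μ1 with hX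
    have hreal2 : Real.exp a * d + Real.exp a * s * c1' ≤ Real.exp a * A' := by
      have h1 : A' - B' = a * d := had.symm
      have h2 : c1' ≤ d := by simp only [hddef]; linarith
      have h3 : a * d = s * d + d := by simp only [hsdef]; ring
      have h4 : 0 ≤ s * (d - c1') := mul_nonneg (le_of_lt hs0) (sub_nonneg.2 h2)
      have hbase : d + s * c1' ≤ A' := by nlinarith
      calc Real.exp a * d + Real.exp a * s * c1' = Real.exp a * (d + s * c1') := by ring
        _ ≤ Real.exp a * A' := mul_le_mul_of_nonneg_left hbase (le_of_lt hea)
    have hmain : ENNReal.ofReal (Real.exp a) * (μ1 + μ2) + X ≤ (I1 + I2) + X := by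
      calc ENNReal.ofReal (Real.exp a) * (μ1 + μ2) + X
          = ENNReal.ofReal (Real.exp a * d + Real.exp a * s * c1') := by
            rw [hX, hμ1eq, hμ2eq, ← ENNReal.ofReal_add hc1nn hc2nn,
              ← ENNReal.ofReal_mul (le_of_lt hea),
              ← ENNReal.ofReal_mul (by positivity : (0:ℝ) ≤ Real.exp a * s),
              ← ENNReal.ofReal_add (by positivity) (by positivity)]
        _ ≤ ENNReal.ofReal (Real.exp a * A') := ENNReal.ofReal_le_ofReal hreal2
        _ = ENNReal.ofReal (Real.exp a) * A := by
            rw [ENNReal.ofReal_mul (le_of_lt hea), ← hAeq]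
        _ ≤ ENNReal.ofReal (Real.exp a) *
              (integD n δ (fun x => f1 x - s) E1 + ENNReal.ofReal s * μ1) :=
            mul_le_mul_right hsub _
        _ = ENNReal.ofReal (Real.exp a) * integD n δ (fun x => f1 x - s) E1 + X := by
            rw [hX, ENNReal.ofReal_mul (le_of_lt hea)]
            ring
        _ ≤ I1 + X := add_le_add_left hI1 X
        _ ≤ (I1 + I2) + X := add_le_add_left (le_add_right le_rfl) X
    have hXfin : X ≠ ∞ := ENNReal.mul_ne_top ENNReal.ofReal_ne_top hc1
    exact (ENNReal.add_le_add_iff_right hXfin).1 hmain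


lemma integD_ne_top (hδ0 : 0 < δ) {g f : (Fin n → ℝ) → ℝ} {E : Set (Fin n → ℝ)} {Q : Cube n}
    (hE : E ⊆ Q.toSet) (hgf : ∀ x ∈ E, g x ≤ |f x|)
    (hf : ∀ K : Set (Fin n → ℝ), IsCompact K → integH n δ (fun x => |f x|) K < ⊤) :
    integD n δ g E ≠ ∞ := by
  set K := closure Q.toSet with hK
  set C : ℝ≥0∞ := (2^n : ℝ≥0∞) * ENNReal.ofReal ((2:ℝ)^δ) with hC
  have hCne : C ≠ ∞ := ENNReal.mul_ne_top
    (by exact ENNReal.pow_ne_top (by norm_num)) ENNReal.ofReal_ne_top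
  have hpt : ∀ t : ℝ, dContent n δ {x | x ∈ E ∧ t < g x} ≤
      C * hContent n δ {x | x ∈ K ∧ t < |f x|} := by
    intro t
    calc dContent n δ {x | x ∈ E ∧ t < g x}
        ≤ C * hContent n δ {x | x ∈ E ∧ t < g x} := dContent_le_hContent hδ0 _
      _ ≤ C * hContent n δ {x | x ∈ K ∧ t < |f x|} := by
          refine mul_le_mul_right (hContent_mono ?_) _
          rintro x ⟨hx1, hx2⟩
          exact ⟨subset_closure (hE hx1), lt_of_lt_of_le hx2 (hgf x hx1)⟩
  have : integD n δ g E ≤ C * integH n δ (fun x => |f x|) K := by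
    calc integD n δ g E
        ≤ ∫⁻ t in Ioi (0:ℝ), C * hContent n δ {x | x ∈ K ∧ t < |f x|} :=
          lintegral_mono fun t => hpt t
      _ = C * integH n δ (fun x => |f x|) K := lintegral_const_mul' _ _ hCne
  refine ne_of_lt (lt_of_le_of_lt this ?_)
  exact ENNReal.mul_lt_top hCne.lt_top (hf K (isCompact_closure_toSet Q))

end Stmt12Aux

open Stmt12Aux

/-- Jensen-type inequalities for the integral average `f_{Q,δ}`. -/
theorem stmt12 (n : ℕ) (hn : 1 ≤ n) (δ : ℝ) (hδ0 : 0 < δ) (hδn : δ ≤ n)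
    (f : (Fin n → ℝ) → ℝ) (hf : MemL1loc n δ f) :
    ∀ Q : Cube n,
      ENNReal.ofReal (Real.exp (avgQ n δ f Q)) ≤
        (integD n δ (fun x => Real.exp (f x)) (Q.toSet ∩ {x | 0 ≤ f x}) +
            integD n δ (fun x => Real.exp (f x)) (Q.toSet ∩ {x | f x < 0})) /
          dContent n δ Q.toSet ∧
      ENNReal.ofReal (Real.exp (-(avgQ n δ f Q))) ≤
        (integD n δ (fun x => Real.exp (-(f x))) (Q.toSet ∩ {x | 0 ≤ f x}) +
            integD n δ (fun x => Real.exp (-(f x))) (Q.toSet ∩ {x | f x < 0})) /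
          dContent n δ Q.toSet := by
  intro Q
  set E1 := Q.toSet ∩ {x | 0 ≤ f x} with hE1
  set E2 := Q.toSet ∩ {x | f x < 0} with hE2
  have hE1sub : E1 ⊆ Q.toSet := inter_subset_left
  have hE2sub : E2 ⊆ Q.toSet := inter_subset_left
  have hQeq : Q.toSet ⊆ E1 ∪ E2 := by
    intro x hx
    rcases le_or_gt 0 (f x) with h | h
    · exact Or.inl ⟨hx, h⟩
    · exact Or.inr ⟨hx, h⟩
  have hμQtop : dContent n δ Q.toSet ≠ ∞ := ne_of_lt (dContent_lt_top hδ0 subset_rfl)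
  have hμQ0 : dContent n δ Q.toSet ≠ 0 := by
    refine ne_of_gt (lt_of_lt_of_le ?_ (le_dContent_cube hδ0 hδn Q))
    simp only [ENNReal.ofReal_pos]
    exact Real.rpow_pos_of_pos Q.side_pos δ
  have hle : dContent n δ Q.toSet ≤ dContent n δ E1 + dContent n δ E2 :=
    le_trans (dContent_mono hQeq) dContent_union
  have hc1 : dContent n δ E1 ≠ ∞ := ne_of_lt (dContent_lt_top hδ0 hE1sub)
  have hc2 : dContent n δ E2 ≠ ∞ := ne_of_lt (dContent_lt_top hδ0 hE2sub)
  have h1 : ∀ x ∈ E1, 0 ≤ f x := fun x hx => hx.2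
  have h2 : ∀ x ∈ E2, 0 ≤ -f x := fun x hx => by
    have := hx.2
    simp only [hE2, mem_inter_iff, mem_setOf_eq] at this ⊢
    linarith [hx.2]
  have hA : integD n δ f E1 ≠ ∞ :=
    integD_ne_top hδ0 hE1sub (fun x _ => le_abs_self (f x)) hf.2
  have hB : integD n δ (fun x => -f x) E2 ≠ ∞ :=
    integD_ne_top hδ0 hE2sub (fun x _ => neg_le_abs (f x)) hf.2
  have hd : 0 < (dContent n δ E1).toReal + (dContent n δ E2).toReal := by
    have hsum0 : dContent n δ E1 + dContent n δ E2 ≠ 0 := by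
      intro h
      rw [h] at hle
      exact hμQ0 (le_antisymm hle zero_le)
    have hpos : 0 < (dContent n δ E1 + dContent n δ E2).toReal :=
      ENNReal.toReal_pos hsum0 (ENNReal.add_ne_top.2 ⟨hc1, hc2⟩)
    rwa [ENNReal.toReal_add hc1 hc2] at hpos
  have havg : avgQ n δ f Q = ((integD n δ f E1).toReal -
      (integD n δ (fun x => -f x) E2).toReal) /
      ((dContent n δ E1).toReal + (dContent n δ E2).toReal) := rfl
  constructor
  · -- first inequality
    have hcore := core hδ0 h1 h2 hA hB hc1 hc2 hd
    rw [ENNReal.le_div_iff_mul_le (Or.inl hμQ0) (Or.inl hμQtop)]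
    have heq2 : integD n δ (fun x => Real.exp (-(-f x))) E2
        = integD n δ (fun x => Real.exp (f x)) E2 := by
      congr 1
      funext x
      rw [neg_neg]
    calc ENNReal.ofReal (Real.exp (avgQ n δ f Q)) * dContent n δ Q.toSet
        ≤ ENNReal.ofReal (Real.exp (avgQ n δ f Q)) *
            (dContent n δ E1 + dContent n δ E2) := mul_le_mul_right hle _
      _ ≤ integD n δ (fun x => Real.exp (f x)) E1 +
            integD n δ (fun x => Real.exp (-(-f x))) E2 := by
          rw [havg]
          exact hcore
      _ = integD n δ (fun x => Real.exp (f x)) E1 +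
            integD n δ (fun x => Real.exp (f x)) E2 := by rw [heq2]
  · -- second inequality
    have hd' : 0 < (dContent n δ E2).toReal + (dContent n δ E1).toReal := by linarith
    have hcore := core hδ0 h2 h1 hB hA hc2 hc1 hd'
    rw [ENNReal.le_div_iff_mul_le (Or.inl hμQ0) (Or.inl hμQtop)]
    have ha2 : Real.exp (-(avgQ n δ f Q)) =
        Real.exp (((integD n δ (fun x => -f x) E2).toReal - (integD n δ f E1).toReal) /
          ((dContent n δ E2).toReal + (dContent n δ E1).toReal)) := by
      congr 1
      rw [havg]
      ring
    calc ENNReal.ofReal (Real.exp (-(avgQ n δ f Q))) * dContent n δ Q.toSet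
        ≤ ENNReal.ofReal (Real.exp (-(avgQ n δ f Q))) *
            (dContent n δ E2 + dContent n δ E1) := by
          refine mul_le_mul_right (hle.trans (le_of_eq (add_comm _ _))) _
      _ ≤ integD n δ (fun x => Real.exp (-f x)) E2 +
            integD n δ (fun x => Real.exp (-f x)) E1 := by
          rw [ha2]
          exact hcore
      _ = integD n δ (fun x => Real.exp (-(f x))) E1 +
            integD n δ (fun x => Real.exp (-(f x))) E2 := add_comm _ _
end
end
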